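/- arXiv:0806.1818 — 5 statements merged into one kernel-verified Lean document; each statement's English description precedes it below -/
import Mathlib

section
/- For every weight function w : L → ℝ with w ≥ 0 there exists a finitely supported function y from the flats of M to ℝ with y ≥ 0 and a(y)_l ≥ w_l for all l ∈ L, such that the support {F : y_F ≠ 0} is a chain (totally ordered by inclusion) and r(y) ≤ r(y') for every finitely supported y' from the flats of M to ℝ with y' ≥ 0 and a(y')_l ≥ w_l for all l ∈ L. (There is an optimal dual solution whose support is a chain of flats.) -/
open Set

variable {α : Type*}

/-- The rank of a set in a matroid: the supremum of the cardinalities of its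
independent subsets. -/
noncomputable def Matroid.rk' (M : Matroid α) (X : Set α) : ℕ :=
  sSup {n : ℕ | ∃ I, M.Indep I ∧ I ⊆ X ∧ I.ncard = n}

/-- A matroid is loopless if the closure of the empty set is empty. -/
def Matroid.Loopless' (M : Matroid α) : Prop := M.closure ∅ = ∅

/-- A line of a matroid: a subset of the ground set of rank 1 or 2. -/
def Matroid.IsLine (M : Matroid α) (l : Set α) : Prop :=
  l ⊆ M.E ∧ (M.rk' l = 1 ∨ M.rk' l = 2)

open scoped Classical in
/-- Degree `a(X)_l` of a set `X` at a line `l`. -/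
noncomputable def deg (X l : Set α) : ℕ :=
  if X ∩ l = ∅ then 0 else if l ⊆ X then 2 else 1

/-- A fractional matching of the pair `(M, L)`. -/
def IsFracMatching (M : Matroid α) (L : Finset (Set α)) (x : Set α → ℝ) : Prop :=
  (∀ l ∈ L, 0 ≤ x l) ∧
  ∀ F : Set α, M.IsFlat F → ∑ l ∈ L, (deg F l : ℝ) * x l ≤ (M.rk' F : ℝ)

/-- `a(y)_l` for a finitely supported `y` on flats. -/
noncomputable def aDual (y : Set α →₀ ℝ) (l : Set α) : ℝ :=
  y.sum fun F c => c * (deg F l : ℝ)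

/-- `r(y)` for a finitely supported `y` on flats. -/
noncomputable def rDual (M : Matroid α) (y : Set α →₀ ℝ) : ℝ :=
  y.sum fun F c => c * (M.rk' F : ℝ)

set_option linter.unusedSectionVars false
namespace StmtAux

open Matroid

variable {M : Matroid α} [M.RankFinite] {I J X Y F G l : Set α}

lemma indep_ncard_le (hI : M.IsBasis' I X) (hJ : M.Indep J) (hJX : J ⊆ X) :
    J.ncard ≤ I.ncard := by
  obtain ⟨J', hJ', hJJ'⟩ := hJ.subset_isBasis'_of_subset hJX
  have hcard := hJ'.encard_eq_encard hI
  have hfin : I.Finite := hI.indep.finite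
  have h1 : J.encard ≤ I.encard := by rw [← hcard]; exact encard_mono hJJ'
  rw [Set.ncard_def, Set.ncard_def]
  exact ENat.toNat_le_toNat h1 hfin.encard_lt_top.ne

lemma rk'_eq_ncard (hI : M.IsBasis' I X) : M.rk' X = I.ncard := by
  apply le_antisymm
  · refine csSup_le ⟨0, ⟨∅, M.empty_indep, empty_subset _, Set.ncard_empty _⟩⟩ ?_
    rintro n ⟨J, hJ, hJX, rfl⟩
    exact indep_ncard_le hI hJ hJX
  · exact le_csSup ⟨I.ncard, by rintro n ⟨J, hJ, hJX, rfl⟩; exact indep_ncard_le hI hJ hJX⟩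
      ⟨I, hI.indep, hI.subset, rfl⟩

lemma ncard_le_rk' (hJ : M.Indep J) (hJX : J ⊆ X) : J.ncard ≤ M.rk' X := by
  obtain ⟨I, hI⟩ := M.exists_isBasis' X
  rw [rk'_eq_ncard hI]
  exact indep_ncard_le hI hJ hJX

lemma rk'_mono (h : X ⊆ Y) : M.rk' X ≤ M.rk' Y := by
  obtain ⟨I, hI⟩ := M.exists_isBasis' X
  rw [rk'_eq_ncard hI]
  exact ncard_le_rk' hI.indep (hI.subset.trans h)

lemma rk'_closure (M : Matroid α) [M.RankFinite] (X : Set α) : M.rk' (M.closure X) = M.rk' X := by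
  obtain ⟨I, hI⟩ := M.exists_isBasis' X
  rw [rk'_eq_ncard hI, rk'_eq_ncard hI.isBasis_closure_right.isBasis']

lemma rk'_empty (M : Matroid α) [M.RankFinite] : M.rk' (∅ : Set α) = 0 := by
  rw [rk'_eq_ncard (M.empty_indep.isBasis_self.isBasis'), Set.ncard_empty]

lemma flat_eq_of_subset (hF : M.IsFlat F) (hF' : M.IsFlat G) (hss : F ⊆ G)
    (hr : M.rk' G ≤ M.rk' F) : F = G := by
  obtain ⟨I, hI⟩ := M.exists_isBasis' F
  obtain ⟨J, hJ, hIJ⟩ := hI.indep.subset_isBasis'_of_subset (hI.subset.trans hss)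
  have h1 : M.rk' F = I.ncard := rk'_eq_ncard hI
  have h2 : M.rk' G = J.ncard := rk'_eq_ncard hJ
  have hIJ' : I = J :=
    Set.eq_of_subset_of_ncard_le hIJ (by omega) hJ.indep.finite
  refine hss.antisymm ?_
  calc G ⊆ M.closure G := M.subset_closure G hF'.subset_ground
    _ = M.closure J := hJ.closure_eq_closure.symm
    _ = M.closure I := by rw [hIJ']
    _ ⊆ M.closure F := M.closure_subset_closure hI.subset
    _ = F := hF.closure

lemma rk'_submod (M : Matroid α) [M.RankFinite] (X Y : Set α) :
    M.rk' (X ∩ Y) + M.rk' (X ∪ Y) ≤ M.rk' X + M.rk' Y := by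
  obtain ⟨I, hI⟩ := M.exists_isBasis' (X ∩ Y)
  obtain ⟨J, hJ, hIJ⟩ :=
    hI.indep.subset_isBasis'_of_subset (hI.subset.trans (inter_subset_left.trans subset_union_left))
  have hJfin := hJ.indep.finite
  have h1 : M.rk' (X ∩ Y) = I.ncard := rk'_eq_ncard hI
  have h2 : M.rk' (X ∪ Y) = J.ncard := rk'_eq_ncard hJ
  have hXle : (J ∩ X).ncard ≤ M.rk' X :=
    ncard_le_rk' (hJ.indep.subset inter_subset_left) inter_subset_right
  have hYle : (J ∩ Y).ncard ≤ M.rk' Y :=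
    ncard_le_rk' (hJ.indep.subset inter_subset_left) inter_subset_right
  have hu : (J ∩ X) ∪ (J ∩ Y) = J := by
    rw [← inter_union_distrib_left]
    exact inter_eq_left.mpr hJ.subset
  have hi : (J ∩ X) ∩ (J ∩ Y) = J ∩ (X ∩ Y) := by
    ext z; simp only [mem_inter_iff]; tauto
  have hcard := Set.ncard_union_add_ncard_inter (J ∩ X) (J ∩ Y)
    (hJfin.subset inter_subset_left) (hJfin.subset inter_subset_left)
  rw [hu, hi] at hcard
  have hIle : I.ncard ≤ (J ∩ (X ∩ Y)).ncard :=
    Set.ncard_le_ncard (subset_inter hIJ hI.subset) (hJfin.subset inter_subset_left)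
  omega

lemma flat_closure (M : Matroid α) (X : Set α) : M.IsFlat (M.closure X) := by
  rw [Matroid.closure_def]
  have hne : {F | M.IsFlat F ∧ X ∩ M.E ⊆ F}.Nonempty := ⟨M.E, M.ground_isFlat, inter_subset_right⟩
  have := hne.coe_sort
  rw [sInter_eq_iInter]
  exact Matroid.IsFlat.iInter fun F => F.2.1

lemma flat_inter (hF : M.IsFlat F) (hG : M.IsFlat G) : M.IsFlat (F ∩ G) := by
  have h : F ∩ G = ⋂ b : Bool, (if b then F else G) := by
    ext x; simp [Bool.forall_bool, and_comm]
  rw [h]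
  exact Matroid.IsFlat.iInter fun b => by cases b <;> simpa

lemma indep_singleton' (hM : M.Loopless') {x : α} (hx : x ∈ M.E) : M.Indep {x} := by
  obtain ⟨I, hI⟩ := M.exists_isBasis' {x}
  have hxcl : x ∈ M.closure I := by
    rw [hI.closure_eq_closure]; exact M.mem_closure_self x hx
  rcases Set.subset_singleton_iff_eq.mp hI.subset with rfl | rfl
  · rw [Matroid.Loopless'] at hM
    rw [hM] at hxcl
    exact absurd hxcl (notMem_empty x)
  · exact hI.indep

lemma flat_rk'_zero (hM : M.Loopless') (hF : M.IsFlat F) (h : M.rk' F = 0) : F = ∅ := by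
  rw [eq_empty_iff_forall_notMem]
  intro x hx
  have h1 : ({x} : Set α).ncard ≤ M.rk' F :=
    ncard_le_rk' (indep_singleton' hM (hF.subset_ground hx)) (singleton_subset_iff.mpr hx)
  simp [Set.ncard_singleton, h] at h1

lemma line_nonempty (hl : M.IsLine l) : l.Nonempty := by
  rw [Set.nonempty_iff_ne_empty]
  rintro rfl
  rcases hl.2 with h | h <;> rw [rk'_empty] at h <;> omega


lemma deg_le_two (X l : Set α) : deg X l ≤ 2 := by
  unfold deg; split_ifs <;> omega

lemma deg_eq_zero (h : X ∩ l = ∅) : deg X l = 0 := by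
  unfold deg; rw [if_pos h]

lemma deg_eq_two (hl : l.Nonempty) (h : l ⊆ X) : deg X l = 2 := by
  have hne : X ∩ l ≠ ∅ := by
    obtain ⟨x, hx⟩ := hl
    exact Set.nonempty_iff_ne_empty.mp ⟨x, h hx, hx⟩
  unfold deg; rw [if_neg hne, if_pos h]

lemma deg_eq_one (h1 : (X ∩ l).Nonempty) (h2 : ¬ l ⊆ X) : deg X l = 1 := by
  unfold deg; rw [if_neg h1.ne_empty, if_neg h2]

lemma one_le_deg (h : (X ∩ l).Nonempty) : 1 ≤ deg X l := by
  unfold deg; rw [if_neg h.ne_empty]; split_ifs <;> omega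

lemma deg_mono (h : X ⊆ Y) (l : Set α) : deg X l ≤ deg Y l := by
  rcases Set.eq_empty_or_nonempty (X ∩ l) with hX | hX
  · rw [deg_eq_zero hX]; omega
  · have hlne : l.Nonempty := hX.mono inter_subset_right
    have h1 : 1 ≤ deg Y l := one_le_deg (hX.mono (inter_subset_inter_left l h))
    by_cases h2 : l ⊆ X
    · rw [deg_eq_two hlne h2, deg_eq_two hlne (h2.trans h)]
    · rw [deg_eq_one hX h2]; exact h1

lemma key_pair (hM : M.Loopless') (hF : M.IsFlat F) (hG : M.IsFlat G) (hl : M.IsLine l)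
    {x y : α} (hxF : x ∈ F) (hxl : x ∈ l) (hyG : y ∈ G) (hyl : y ∈ l) :
    y ∈ F ∨ l ⊆ M.closure (F ∪ G) := by
  have hxE : x ∈ M.E := hF.subset_ground hxF
  have hyE : y ∈ M.E := hl.1 hyl
  by_cases hyx : y ∈ M.closure {x}
  · left
    have hsub : M.closure {x} ⊆ F := by
      have h := M.closure_subset_closure (singleton_subset_iff.mpr hxF)
      rwa [hF.closure] at h
    exact hsub hyx
  · right
    have hIx : M.Indep {x} := indep_singleton' hM hxE
    have hne : y ≠ x := by
      rintro rfl; exact hyx (M.mem_closure_self y hyE)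
    have hpair : M.Indep {x, y} := by
      rw [Set.pair_comm, show ({y, x} : Set α) = insert y {x} from rfl,
        hIx.insert_indep_iff_of_notMem (by simpa using hne)]
      exact ⟨hyE, hyx⟩
    have hsub : ({x, y} : Set α) ⊆ l := by
      rintro z (rfl | rfl); exacts [hxl, hyl]
    have h2 : M.rk' {x, y} = 2 := by
      rw [rk'_eq_ncard hpair.isBasis_self.isBasis']; exact Set.ncard_pair hne.symm
    have hl2 : M.rk' l = 2 := by
      have hle := ncard_le_rk' hpair hsub
      rw [Set.ncard_pair hne.symm] at hle
      rcases hl.2 with h | h <;> omega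
    have heq : M.closure {x, y} = M.closure l := by
      refine flat_eq_of_subset (flat_closure M _) (flat_closure M _)
        (M.closure_subset_closure hsub) ?_
      rw [rk'_closure, rk'_closure, h2, hl2]
    calc l ⊆ M.closure l := M.subset_closure l hl.1
      _ = M.closure {x, y} := heq.symm
      _ ⊆ M.closure (F ∪ G) := M.closure_subset_closure
          (by rintro z (rfl | rfl); exacts [Or.inl hxF, Or.inr hyG])

lemma deg_superadd (hM : M.Loopless') (hF : M.IsFlat F) (hG : M.IsFlat G) (hl : M.IsLine l) :
    deg F l + deg G l ≤ deg (F ∩ G) l + deg (M.closure (F ∪ G)) l := by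
  have hFV : F ⊆ M.closure (F ∪ G) :=
    subset_union_left.trans (M.subset_closure (F ∪ G)
      (union_subset hF.subset_ground hG.subset_ground))
  have hGV : G ⊆ M.closure (F ∪ G) :=
    subset_union_right.trans (M.subset_closure (F ∪ G)
      (union_subset hF.subset_ground hG.subset_ground))
  have hlne : l.Nonempty := line_nonempty hl
  rcases Set.eq_empty_or_nonempty (F ∩ l) with hFl | hFl
  · rw [deg_eq_zero hFl]
    have := deg_mono hGV l
    omega
  rcases Set.eq_empty_or_nonempty (G ∩ l) with hGl | hGl
  · rw [deg_eq_zero hGl]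
    have := deg_mono hFV l
    omega
  obtain ⟨x, hxF, hxl⟩ := hFl
  obtain ⟨y, hyG, hyl⟩ := hGl
  by_cases hlF : l ⊆ F
  · have hV2 : deg (M.closure (F ∪ G)) l = 2 := deg_eq_two hlne (hlF.trans hFV)
    by_cases hlG : l ⊆ G
    · rw [deg_eq_two hlne hlF, deg_eq_two hlne hlG, hV2,
        deg_eq_two hlne (subset_inter hlF hlG)]
    · have hd1 : 1 ≤ deg (F ∩ G) l := one_le_deg ⟨y, ⟨hlF hyl, hyG⟩, hyl⟩
      rw [deg_eq_two hlne hlF, deg_eq_one ⟨y, hyG, hyl⟩ hlG, hV2]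
      omega
  by_cases hlG : l ⊆ G
  · have hV2 : deg (M.closure (F ∪ G)) l = 2 := deg_eq_two hlne (hlG.trans hGV)
    have hd1 : 1 ≤ deg (F ∩ G) l := one_le_deg ⟨x, ⟨hxF, hlG hxl⟩, hxl⟩
    rw [deg_eq_one ⟨x, hxF, hxl⟩ hlF, deg_eq_two hlne hlG, hV2]
    omega
  rw [deg_eq_one ⟨x, hxF, hxl⟩ hlF, deg_eq_one ⟨y, hyG, hyl⟩ hlG]
  rcases key_pair hM hF hG hl hxF hxl hyG hyl with hyF | hlV
  · have hd1 : 1 ≤ deg (F ∩ G) l := one_le_deg ⟨y, ⟨hyF, hyG⟩, hyl⟩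
    have hd2 : 1 ≤ deg (M.closure (F ∪ G)) l := one_le_deg ⟨x, hFV hxF, hxl⟩
    omega
  · rw [deg_eq_two hlne hlV]
    have hd0 : 0 ≤ deg (F ∩ G) l := Nat.zero_le _
    omega

lemma sq_spread {a b cm dj : ℝ} (h0 : cm + dj - a - b = 0) (h1 : a + 1 ≤ dj)
    (h2 : b + 1 ≤ dj) : a * a + b * b < cm * cm + dj * dj := by
  have hcm : cm = a + b - dj := by linarith
  subst hcm
  nlinarith [mul_pos (by linarith : (0:ℝ) < dj - a) (by linarith : (0:ℝ) < dj - b)]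

lemma sum_ite_mul {T : Type*} [Fintype T] [DecidableEq T] (u₀ : T) (c : ℝ) (g : T → ℝ) :
    ∑ u, (if u = u₀ then c else 0) * g u = c * g u₀ := by
  rw [Finset.sum_eq_single_of_mem u₀ (Finset.mem_univ _)
    (fun b _ hb => by rw [if_neg hb, zero_mul]), if_pos rfl]

lemma sum_shift {T : Type*} [Fintype T] [DecidableEq T] (z : T → ℝ) (ε : ℝ)
    (t1 t2 t3 t4 : T) (g : T → ℝ) :
    ∑ u, (z u + (if u = t1 then ε else 0) + (if u = t2 then ε else 0)
        - (if u = t3 then ε else 0) - (if u = t4 then ε else 0)) * g u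
      = (∑ u, z u * g u) + ε * g t1 + ε * g t2 - ε * g t3 - ε * g t4 := by
  simp only [sub_mul, add_mul]
  rw [Finset.sum_sub_distrib, Finset.sum_sub_distrib, Finset.sum_add_distrib,
    Finset.sum_add_distrib, sum_ite_mul, sum_ite_mul, sum_ite_mul, sum_ite_mul]

end StmtAux

section MainProof


open StmtAux

open scoped Classical

theorem stmt_1' (M : Matroid α) [M.RankFinite] (hM : M.Loopless')
    (L : Finset (Set α)) (hL : ∀ l ∈ L, M.IsLine l)
    (w : Set α → ℝ) (hw : ∀ l ∈ L, 0 ≤ w l) :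
    ∃ y : Set α →₀ ℝ,
      (∀ F, 0 ≤ y F) ∧
      (∀ F ∈ y.support, M.IsFlat F) ∧
      (∀ l ∈ L, w l ≤ (y.sum fun F c => c * (deg F l : ℝ))) ∧
      IsChain (· ⊆ ·) (y.support : Set (Set α)) ∧
      (∀ y' : Set α →₀ ℝ, (∀ F, 0 ≤ y' F) → (∀ F ∈ y'.support, M.IsFlat F) →
        (∀ l ∈ L, w l ≤ (y'.sum fun F c => c * (deg F l : ℝ))) →
        (y.sum fun F c => c * (M.rk' F : ℝ)) ≤ (y'.sum fun F c => c * (M.rk' F : ℝ))) := by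
  classical
  by_cases hpos : ∃ l ∈ L, 0 < w l
  swap
  · push_neg at hpos
    refine ⟨0, by simp, by simp, ?_, by simp, ?_⟩
    · intro l hl
      have : w l = 0 := le_antisymm (hpos l hl) (hw l hl)
      simp [this]
    · intro y' hy0 _ _
      rw [Finsupp.sum_zero_index]
      exact Finset.sum_nonneg fun F _ => mul_nonneg (hy0 F) (Nat.cast_nonneg _)
  obtain ⟨l₀, hl₀L, hl₀w⟩ := hpos
  set n := M.rk' M.E with hn
  have hn1 : 1 ≤ n := by
    have h1 : M.rk' l₀ ≤ n := rk'_mono (hL l₀ hl₀L).1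
    rcases (hL l₀ hl₀L).2 with h | h <;> omega
  -- profiles
  set prof : Set α → ((↥L → Fin 3) × Fin (n + 1)) := fun F =>
    (fun l => ⟨deg F l.1, by have := deg_le_two F l.1; omega⟩,
     ⟨min (M.rk' F) n, Nat.lt_succ_of_le (min_le_right _ _)⟩) with hprofdef
  have hprof_deg : ∀ (F : Set α) (l : ↥L), ((prof F).1 l : ℕ) = deg F l.1 := fun F l => rfl
  have hprof_rk : ∀ F : Set α, M.IsFlat F → ((prof F).2 : ℕ) = M.rk' F := by
    intro F hF
    have h : M.rk' F ≤ n := rk'_mono hF.subset_ground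
    simp only [hprofdef]
    exact min_eq_left h
  set Rz : ((↥L → Fin 3) × Fin (n + 1)) → Prop := fun t => ∃ F, M.IsFlat F ∧ prof F = t
    with hRzdef
  set rep : ((↥L → Fin 3) × Fin (n + 1)) → Set α :=
    fun t => if h : Rz t then h.choose else ∅ with hrepdef
  have hrep : ∀ t, Rz t → M.IsFlat (rep t) ∧ prof (rep t) = t := by
    intro t ht
    simp only [hrepdef, dif_pos ht]
    exact ht.choose_spec
  set dT : ((↥L → Fin 3) × Fin (n + 1)) → ↥L → ℝ := fun t l => ((t.1 l : ℕ) : ℝ) with hdTdef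
  set rT : ((↥L → Fin 3) × Fin (n + 1)) → ℝ := fun t => ((t.2 : ℕ) : ℝ) with hrTdef
  set val : (((↥L → Fin 3) × Fin (n + 1)) → ℝ) → ℝ := fun z => ∑ u, z u * rT u with hvaldef
  set Phi : (((↥L → Fin 3) × Fin (n + 1)) → ℝ) → ℝ := fun z => ∑ u, z u * (rT u * rT u)
    with hPhidef
  set c : ℝ := (∑ l ∈ L, w l) / 2 with hc
  have hc0 : 0 ≤ c := div_nonneg (Finset.sum_nonneg fun l hl => hw l hl) (by norm_num)
  have hcw : ∀ l ∈ L, w l ≤ 2 * c := by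
    intro l hl
    rw [hc, mul_div_cancel₀ _ (two_ne_zero)]
    exact Finset.single_le_sum (fun l' hl' => hw l' hl') hl
  set B : ℝ := c * n with hB
  set K : Set ((((↥L → Fin 3) × Fin (n + 1))) → ℝ) :=
    {z | (∀ t, 0 ≤ z t) ∧ (∀ t, z t ≠ 0 → Rz t)
      ∧ (∀ l : ↥L, w l.1 ≤ ∑ u, z u * dT u l) ∧ (∑ u, z u) ≤ B} with hKdef
  -- the trivial solution
  have hz₀K : (fun t => if t = prof M.E then c else 0) ∈ K := by
    refine ⟨fun t => by dsimp only; split_ifs <;> simp [hc0], ?_, ?_, ?_⟩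
    · intro t ht
      dsimp only at ht
      split_ifs at ht with h
      · exact h ▸ ⟨M.E, M.ground_isFlat, rfl⟩
      · simp at ht
    · intro l
      rw [sum_ite_mul (prof M.E) c (fun u => dT u l)]
      have hdeg : deg M.E l.1 = 2 :=
        deg_eq_two (line_nonempty (hL l.1 l.2)) (hL l.1 l.2).1
      have h2 : dT (prof M.E) l = 2 := by
        simp only [hdTdef, hprof_deg M.E l, hdeg]; norm_num
      rw [h2, mul_comm]
      exact hcw l.1 l.2
    · rw [Finset.sum_ite_eq' Finset.univ (prof M.E) (fun _ => c), if_pos (Finset.mem_univ _), hB]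
      exact le_mul_of_one_le_right hc0 (by exact_mod_cast hn1)
  have hz₀val : val (fun t => if t = prof M.E then c else 0) = B := by
    have h2 : rT (prof M.E) = (n : ℝ) := by
      simp only [hrTdef, hprof_rk M.E M.ground_isFlat]
      exact congrArg _ (by rw [← hn])
    rw [hvaldef]
    simp only []
    rw [sum_ite_mul (prof M.E) c rT, h2, hB]
  -- compactness
  have hdcont : ∀ (g : ((↥L → Fin 3) × Fin (n + 1)) → ℝ),
      Continuous fun z : ((↥L → Fin 3) × Fin (n + 1)) → ℝ => ∑ u, z u * g u :=
    fun g => continuous_finset_sum _ fun u _ => (continuous_apply u).mul continuous_const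
  have hKclosed : IsClosed K := by
    rw [hKdef]
    rw [show {z : (((↥L → Fin 3) × Fin (n + 1))) → ℝ | (∀ t, 0 ≤ z t) ∧ (∀ t, z t ≠ 0 → Rz t)
      ∧ (∀ l : ↥L, w l.1 ≤ ∑ u, z u * dT u l) ∧ (∑ u, z u) ≤ B}
      = {z : (((↥L → Fin 3) × Fin (n + 1))) → ℝ | (∀ t, 0 ≤ z t)}
        ∩ ({z | (∀ t, z t ≠ 0 → Rz t)}
        ∩ ({z | (∀ l : ↥L, w l.1 ≤ ∑ u, z u * dT u l)} ∩ {z | (∑ u, z u) ≤ B})) from rfl]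
    refine IsClosed.inter ?_ (IsClosed.inter ?_ (IsClosed.inter ?_ ?_))
    · rw [Set.setOf_forall]
      exact isClosed_iInter fun t => isClosed_le continuous_const (continuous_apply t)
    · rw [Set.setOf_forall]
      refine isClosed_iInter fun t => ?_
      by_cases h : Rz t
      · have : {z : (((↥L → Fin 3) × Fin (n + 1))) → ℝ | z t ≠ 0 → Rz t} = Set.univ := by
          ext z; simp [h]
        rw [this]; exact isClosed_univ
      · have : {z : (((↥L → Fin 3) × Fin (n + 1))) → ℝ | z t ≠ 0 → Rz t} = {z | z t = 0} := by
          ext z; simp [h]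
        rw [this]; exact isClosed_eq (continuous_apply t) continuous_const
    · rw [Set.setOf_forall]
      exact isClosed_iInter fun l => isClosed_le continuous_const (hdcont (fun u => dT u l))
    · exact isClosed_le (continuous_finset_sum _ fun u _ => continuous_apply u) continuous_const
  have hKsub : K ⊆ Set.pi Set.univ (fun _ : ((↥L → Fin 3) × Fin (n + 1)) => Set.Icc (0:ℝ) B) := by
    intro z hz
    rw [Set.mem_univ_pi]
    intro t
    refine ⟨hz.1 t, ?_⟩
    calc z t ≤ ∑ u, z u := Finset.single_le_sum (fun u _ => hz.1 u) (Finset.mem_univ t)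
      _ ≤ B := hz.2.2.2
  have hKcomp : IsCompact K :=
    IsCompact.of_isClosed_subset (isCompact_univ_pi fun _ => isCompact_Icc) hKclosed hKsub
  have hKne : K.Nonempty := ⟨_, hz₀K⟩
  obtain ⟨z1, hz1K, hz1m⟩ := hKcomp.exists_isMinOn hKne ((hdcont rT).continuousOn)
  set s := val z1 with hs
  have hsmin : ∀ z ∈ K, s ≤ val z := fun z hz => isMinOn_iff.mp hz1m z hz
  have hsB : s ≤ B := hz₀val ▸ isMinOn_iff.mp hz1m _ hz₀K
  set K' : Set ((((↥L → Fin 3) × Fin (n + 1))) → ℝ) := K ∩ {z | val z = s} with hK'def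
  have hK'comp : IsCompact K' := hKcomp.inter_right (isClosed_eq (hdcont rT) continuous_const)
  have hK'ne : K'.Nonempty := ⟨z1, hz1K, rfl⟩
  obtain ⟨zs, hzsK', hzsm⟩ := hK'comp.exists_isMaxOn hK'ne
    ((hdcont (fun u => rT u * rT u)).continuousOn)
  obtain ⟨hzsK, hzsval⟩ := hzsK'
  have hzs0 : ∀ t, 0 ≤ zs t := hzsK.1
  have hzsR : ∀ t, zs t ≠ 0 → Rz t := hzsK.2.1
  have hzsfeas := hzsK.2.2.1
  have hzssum := hzsK.2.2.2
  -- THE UNCROSSING ARGUMENT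
  have hchain : ∀ t t', zs t ≠ 0 → zs t' ≠ 0 → rep t ⊆ rep t' ∨ rep t' ⊆ rep t := by
    intro t t' hzt hzt'
    by_contra hcon
    push_neg at hcon
    obtain ⟨hns1, hns2⟩ := hcon
    obtain ⟨hFflat, hFprof⟩ := hrep t (hzsR t hzt)
    obtain ⟨hGflat, hGprof⟩ := hrep t' (hzsR t' hzt')
    have hFmflat := flat_inter hFflat hGflat
    have hFjflat := flat_closure M (rep t ∪ rep t')
    have hFV : rep t ⊆ M.closure (rep t ∪ rep t') := subset_union_left.trans
      (M.subset_closure _ (union_subset hFflat.subset_ground hGflat.subset_ground))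
    have hGV : rep t' ⊆ M.closure (rep t ∪ rep t') := subset_union_right.trans
      (M.subset_closure _ (union_subset hFflat.subset_ground hGflat.subset_ground))
    have hrt : ((t.2 : ℕ)) = M.rk' (rep t) := by
      have h := hprof_rk _ hFflat
      rwa [hFprof] at h
    have hrt' : ((t'.2 : ℕ)) = M.rk' (rep t') := by
      have h := hprof_rk _ hGflat
      rwa [hGprof] at h
    have hlt1 : M.rk' (rep t) < M.rk' (M.closure (rep t ∪ rep t')) := by
      have hne1 : rep t ≠ M.closure (rep t ∪ rep t') := fun h => hns2 (h ▸ hGV)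
      by_contra h
      push_neg at h
      exact hne1 (flat_eq_of_subset hFflat hFjflat hFV h)
    have hlt2 : M.rk' (rep t') < M.rk' (M.closure (rep t ∪ rep t')) := by
      have hne2 : rep t' ≠ M.closure (rep t ∪ rep t') := fun h => hns1 (h ▸ hFV)
      by_contra h
      push_neg at h
      exact hne2 (flat_eq_of_subset hGflat hFjflat hGV h)
    have hsubm : M.rk' (rep t ∩ rep t') + M.rk' (M.closure (rep t ∪ rep t'))
        ≤ M.rk' (rep t) + M.rk' (rep t') := by
      rw [rk'_closure]; exact rk'_submod M _ _
    have hrm : (((prof (rep t ∩ rep t')).2 : ℕ)) = M.rk' (rep t ∩ rep t') :=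
      hprof_rk _ hFmflat
    have hrj : (((prof (M.closure (rep t ∪ rep t'))).2 : ℕ))
        = M.rk' (M.closure (rep t ∪ rep t')) := hprof_rk _ hFjflat
    -- distinctness
    have htmt : prof (rep t ∩ rep t') ≠ t := by
      intro h
      have h2 := hrm
      rw [h] at h2
      omega
    have htmt' : prof (rep t ∩ rep t') ≠ t' := by
      intro h
      have h2 := hrm
      rw [h] at h2
      omega
    have htjt : prof (M.closure (rep t ∪ rep t')) ≠ t := by
      intro h
      have h2 := hrj
      rw [h] at h2
      omega
    have htjt' : prof (M.closure (rep t ∪ rep t')) ≠ t' := by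
      intro h
      have h2 := hrj
      rw [h] at h2
      omega
    have htmtj : prof (rep t ∩ rep t') ≠ prof (M.closure (rep t ∪ rep t')) := by
      intro h
      have h2 := hrm
      rw [h] at h2
      omega
    have htt' : t ≠ t' := fun h => hns1 (h ▸ subset_rfl)
    set ε := min (zs t) (zs t') with hε
    have hε0 : 0 < ε := lt_min (lt_of_le_of_ne (hzs0 t) (Ne.symm hzt))
      (lt_of_le_of_ne (hzs0 t') (Ne.symm hzt'))
    set tm := prof (rep t ∩ rep t') with htmdef
    set tj := prof (M.closure (rep t ∪ rep t')) with htjdef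
    set z'' := fun u => zs u + (if u = tm then ε else 0) + (if u = tj then ε else 0)
      - (if u = t then ε else 0) - (if u = t' then ε else 0) with hz''def
    have hz''other : ∀ u, u ≠ tm → u ≠ tj → u ≠ t → u ≠ t' → z'' u = zs u := by
      intro u h1 h2 h3 h4
      simp only [hz''def, if_neg h1, if_neg h2, if_neg h3, if_neg h4]
      ring
    have hz''t : z'' t = zs t - ε := by
      simp only [hz''def]
      rw [if_neg (Ne.symm htmt), if_neg (Ne.symm htjt), if_neg htt']
      simp
    have hz''t' : z'' t' = zs t' - ε := by
      simp only [hz''def]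
      rw [if_neg (Ne.symm htmt'), if_neg (Ne.symm htjt'), if_neg (Ne.symm htt')]
      simp
    have hz''tm : z'' tm = zs tm + ε := by
      simp only [hz''def]
      rw [if_neg htmtj, if_neg htmt, if_neg htmt']
      simp
    have hz''tj : z'' tj = zs tj + ε := by
      simp only [hz''def]
      rw [if_neg (Ne.symm htmtj), if_neg htjt, if_neg htjt']
      simp
    have hz''0 : ∀ u, 0 ≤ z'' u := by
      intro u
      by_cases h3 : u = t
      · subst h3; rw [hz''t]; have := min_le_left (zs u) (zs t'); rw [← hε] at this; linarith
      by_cases h4 : u = t'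
      · subst h4; rw [hz''t']; have := min_le_right (zs t) (zs u); rw [← hε] at this; linarith
      by_cases h1 : u = tm
      · subst h1; rw [hz''tm]; have := hzs0 tm; linarith
      by_cases h2 : u = tj
      · subst h2; rw [hz''tj]; have := hzs0 tj; linarith
      · rw [hz''other u h1 h2 h3 h4]; exact hzs0 u
    have hz''R : ∀ u, z'' u ≠ 0 → Rz u := by
      intro u hu
      by_cases h1 : u = tm
      · exact h1 ▸ ⟨_, hFmflat, rfl⟩
      by_cases h2 : u = tj
      · exact h2 ▸ ⟨_, hFjflat, rfl⟩
      by_cases h3 : u = t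
      · exact h3 ▸ hzsR t hzt
      by_cases h4 : u = t'
      · exact h4 ▸ hzsR t' hzt'
      · rw [hz''other u h1 h2 h3 h4] at hu; exact hzsR u hu
    have hz''shift : ∀ g : ((↥L → Fin 3) × Fin (n + 1)) → ℝ,
        ∑ u, z'' u * g u = (∑ u, zs u * g u) + ε * g tm + ε * g tj - ε * g t - ε * g t' := by
      intro g
      simp only [hz''def]
      exact sum_shift zs ε tm tj t t' g
    have hz''sum : ∑ u, z'' u = ∑ u, zs u := by
      have h := hz''shift (fun _ => (1:ℝ))
      simp only [mul_one] at h
      linarith [h]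
    have hdegsup : ∀ l : ↥L, dT t l + dT t' l ≤ dT tm l + dT tj l := by
      intro l
      have hsup := deg_superadd hM hFflat hGflat (hL l.1 l.2)
      have e1 : dT t l = (deg (rep t) l.1 : ℝ) := by
        have h := hprof_deg (rep t) l
        rw [hFprof] at h
        simp only [hdTdef, h]
      have e2 : dT t' l = (deg (rep t') l.1 : ℝ) := by
        have h := hprof_deg (rep t') l
        rw [hGprof] at h
        simp only [hdTdef, h]
      have e3 : dT tm l = (deg (rep t ∩ rep t') l.1 : ℝ) := by
        simp only [hdTdef, htmdef, hprof_deg]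
      have e4 : dT tj l = (deg (M.closure (rep t ∪ rep t')) l.1 : ℝ) := by
        simp only [hdTdef, htjdef, hprof_deg]
      rw [e1, e2, e3, e4]
      exact_mod_cast hsup
    have hz''K : z'' ∈ K := by
      refine ⟨hz''0, hz''R, ?_, ?_⟩
      · intro l
        rw [hz''shift (fun u => dT u l)]
        have h1 := hzsfeas l
        have h2 := hdegsup l
        nlinarith [hε0.le]
      · rw [hz''sum]; exact hzssum
    -- ranks in ℝ
    have hrTt : rT t = (M.rk' (rep t) : ℝ) := by
      simp only [hrTdef]; exact_mod_cast hrt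
    have hrTt' : rT t' = (M.rk' (rep t') : ℝ) := by
      simp only [hrTdef]; exact_mod_cast hrt'
    have hrTtm : rT tm = (M.rk' (rep t ∩ rep t') : ℝ) := by
      simp only [hrTdef]; exact_mod_cast hrm
    have hrTtj : rT tj = (M.rk' (M.closure (rep t ∪ rep t')) : ℝ) := by
      simp only [hrTdef]; exact_mod_cast hrj
    have hvalz'' : val z'' = s + ε * (rT tm + rT tj - rT t - rT t') := by
      simp only [hvaldef]
      rw [hz''shift rT]
      have : (∑ u, zs u * rT u) = s := hzsval
      rw [this]; ring
    have hbrle : rT tm + rT tj - rT t - rT t' ≤ 0 := by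
      rw [hrTt, hrTt', hrTtm, hrTtj]
      have hcc : ((M.rk' (rep t ∩ rep t') + M.rk' (M.closure (rep t ∪ rep t')) : ℕ) : ℝ)
          ≤ ((M.rk' (rep t) + M.rk' (rep t') : ℕ) : ℝ) := Nat.cast_le.mpr hsubm
      push_cast at hcc
      linarith
    have hvle : val z'' ≤ s := by
      rw [hvalz'']
      have hmn := mul_le_mul_of_nonneg_left hbrle hε0.le
      rw [mul_zero] at hmn
      linarith
    have hvge : s ≤ val z'' := hsmin z'' hz''K
    have hbr0 : rT tm + rT tj - rT t - rT t' = 0 := by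
      have h0 : ε * (rT tm + rT tj - rT t - rT t') = 0 := by
        have := le_antisymm hvle hvge
        rw [hvalz''] at this
        linarith
      rcases mul_eq_zero.mp h0 with h | h
      · exact absurd h (ne_of_gt hε0)
      · exact h
    -- strict Phi increase
    have hPhiz'' : Phi z'' = Phi zs + ε * ((rT tm * rT tm + rT tj * rT tj)
        - (rT t * rT t + rT t' * rT t')) := by
      simp only [hPhidef]
      rw [hz''shift (fun u => rT u * rT u)]
      ring
    have hltR1 : rT t + 1 ≤ rT tj := by
      rw [hrTt, hrTtj]
      exact_mod_cast hlt1
    have hltR2 : rT t' + 1 ≤ rT tj := by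
      rw [hrTt', hrTtj]
      exact_mod_cast hlt2
    have hsq : rT t * rT t + rT t' * rT t' < rT tm * rT tm + rT tj * rT tj :=
      sq_spread hbr0 hltR1 hltR2
    have hPhilt : Phi zs < Phi z'' := by
      rw [hPhiz'']
      have hmp := mul_pos hε0 (sub_pos.mpr hsq)
      linarith
    have hz''K' : z'' ∈ K' := ⟨hz''K, by
      rw [Set.mem_setOf_eq, hvalz'', hbr0]; ring⟩
    have := isMaxOn_iff.mp hzsm z'' hz''K'
    have hPz : Phi z'' ≤ Phi zs := this
    linarith
  -- ASSEMBLE THE FINSUPP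
  set y : Set α →₀ ℝ := ∑ u : ((↥L → Fin 3) × Fin (n + 1)), Finsupp.single (rep u) (zs u)
    with hy
  have hyapp : ∀ Fs : Set α,
      y Fs = ∑ u : ((↥L → Fin 3) × Fin (n + 1)), (if rep u = Fs then zs u else 0) := by
    intro Fs
    rw [hy, Finsupp.finset_sum_apply]
    exact Finset.sum_congr rfl fun u _ => Finsupp.single_apply
  have hsupp : ∀ Fs ∈ y.support, ∃ u, zs u ≠ 0 ∧ rep u = Fs := by
    intro Fs hFs
    have h0 := Finsupp.mem_support_iff.mp hFs
    rw [hyapp] at h0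
    obtain ⟨u, _, hu⟩ := Finset.exists_ne_zero_of_sum_ne_zero h0
    by_cases h : rep u = Fs
    · refine ⟨u, ?_, h⟩; simpa [h] using hu
    · simp [h] at hu
  have hsum_index : ∀ g : Set α → ℝ,
      (y.sum fun F c => c * g F) = ∑ u : ((↥L → Fin 3) × Fin (n + 1)), zs u * g (rep u) := by
    intro g
    rw [hy, ← Finsupp.sum_finset_sum_index (by simp) (fun a b1 b2 => add_mul b1 b2 (g a))]
    exact Finset.sum_congr rfl fun u _ => Finsupp.sum_single_index (zero_mul _)
  refine ⟨y, ?_, ?_, ?_, ?_, ?_⟩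
  · intro Fs
    rw [hyapp]
    exact Finset.sum_nonneg fun u _ => by split_ifs; exacts [hzs0 u, le_refl 0]
  · intro Fs hFs
    obtain ⟨u, hu0, hrepu⟩ := hsupp Fs hFs
    exact hrepu ▸ (hrep u (hzsR u hu0)).1
  · intro l hlL
    rw [hsum_index (fun F => (deg F l : ℝ))]
    have hfeas := hzsfeas ⟨l, hlL⟩
    have : ∑ u, zs u * dT u ⟨l, hlL⟩
        = ∑ u : ((↥L → Fin 3) × Fin (n + 1)), zs u * (deg (rep u) l : ℝ) := by
      refine Finset.sum_congr rfl fun u _ => ?_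
      by_cases h : zs u = 0
      · rw [h, zero_mul, zero_mul]
      · obtain ⟨huflat, huprof⟩ := hrep u (hzsR u h)
        congr 1
        have hd := hprof_deg (rep u) ⟨l, hlL⟩
        rw [huprof] at hd
        simp only [hdTdef]
        exact_mod_cast hd
    rw [← this]
    exact hfeas
  · intro Fs hFs Gs hGs _
    obtain ⟨u, hu0, hrepu⟩ := hsupp Fs (Finset.mem_coe.mp hFs)
    obtain ⟨u', hu'0, hrepu'⟩ := hsupp Gs (Finset.mem_coe.mp hGs)
    rw [← hrepu, ← hrepu']
    exact hchain u u' hu0 hu'0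
  · intro y' hy'0 hy'F hy'A
    have hrDy : (y.sum fun F cc => cc * (M.rk' F : ℝ)) = s := by
      rw [hsum_index (fun F => (M.rk' F : ℝ))]
      rw [show (∑ u : ((↥L → Fin 3) × Fin (n + 1)), zs u * (M.rk' (rep u) : ℝ))
        = ∑ u, zs u * rT u from ?_]
      · exact hzsval
      · refine Finset.sum_congr rfl fun u _ => ?_
        by_cases h : zs u = 0
        · rw [h, zero_mul, zero_mul]
        · obtain ⟨huflat, huprof⟩ := hrep u (hzsR u h)
          congr 1
          have hr := hprof_rk _ huflat
          rw [huprof] at hr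
          simp only [hrTdef]
          exact_mod_cast hr.symm
    rw [hrDy]
    -- collapse y' to an abstract solution
    set z' : ((↥L → Fin 3) × Fin (n + 1)) → ℝ := fun u => if (u.2 : ℕ) = 0 then 0
      else ∑ Fs ∈ y'.support.filter (fun Fs => prof Fs = u), y' Fs with hz'def
    have hz'0 : ∀ u, 0 ≤ z' u := by
      intro u
      rw [hz'def]; dsimp only
      split_ifs
      · exact le_refl 0
      · exact Finset.sum_nonneg fun Fs _ => hy'0 Fs
    have hz'R : ∀ u, z' u ≠ 0 → Rz u := by
      intro u hu
      rw [hz'def] at hu; dsimp only at hu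
      split_ifs at hu with h0
      · exact absurd rfl hu
      · obtain ⟨Fs, hFs, _⟩ := Finset.exists_ne_zero_of_sum_ne_zero hu
        rw [Finset.mem_filter] at hFs
        exact ⟨Fs, hy'F Fs hFs.1, hFs.2⟩
    have hfib : ∀ g : Set α → ℝ, ∑ Fs ∈ y'.support, g Fs
        = ∑ u : ((↥L → Fin 3) × Fin (n + 1)),
          ∑ Fs ∈ y'.support.filter (fun Fs => prof Fs = u), g Fs :=
      fun g => (Finset.sum_fiberwise _ _ _).symm
    have hz'term : ∀ (u : ((↥L → Fin 3) × Fin (n + 1))) (g : Set α → ℕ),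
        (∀ Fs, M.IsFlat Fs → prof Fs = u → g Fs = 0 → True) → True := fun _ _ _ => trivial
    have hconval : ∑ u, z' u * rT u = (y'.sum fun F cc => cc * (M.rk' F : ℝ)) := by
      rw [show (y'.sum fun F cc => cc * (M.rk' F : ℝ))
        = ∑ Fs ∈ y'.support, y' Fs * (M.rk' Fs : ℝ) from rfl,
        hfib (fun Fs => y' Fs * (M.rk' Fs : ℝ))]
      refine Finset.sum_congr rfl fun u _ => ?_
      rw [hz'def]; dsimp only
      by_cases h0 : (u.2 : ℕ) = 0
      · rw [if_pos h0, zero_mul]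
        symm
        refine Finset.sum_eq_zero fun Fs hFs => ?_
        rw [Finset.mem_filter] at hFs
        have hflat := hy'F Fs hFs.1
        have hrk : M.rk' Fs = 0 := by rw [← hprof_rk Fs hflat, hFs.2]; exact h0
        rw [hrk]; simp
      · rw [if_neg h0, Finset.sum_mul]
        refine Finset.sum_congr rfl fun Fs hFs => ?_
        rw [Finset.mem_filter] at hFs
        have hflat := hy'F Fs hFs.1
        congr 1
        rw [hrTdef]; dsimp only
        rw [← hFs.2, hprof_rk Fs hflat]
    have hcon : ∀ l : ↥L, ∑ u, z' u * dT u l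
        = (y'.sum fun F cc => cc * (deg F l.1 : ℝ)) := by
      intro l
      rw [show (y'.sum fun F cc => cc * (deg F l.1 : ℝ))
        = ∑ Fs ∈ y'.support, y' Fs * (deg Fs l.1 : ℝ) from rfl,
        hfib (fun Fs => y' Fs * (deg Fs l.1 : ℝ))]
      refine Finset.sum_congr rfl fun u _ => ?_
      rw [hz'def]; dsimp only
      by_cases h0 : (u.2 : ℕ) = 0
      · rw [if_pos h0, zero_mul]
        symm
        refine Finset.sum_eq_zero fun Fs hFs => ?_
        rw [Finset.mem_filter] at hFs
        have hflat := hy'F Fs hFs.1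
        have hrk : M.rk' Fs = 0 := by rw [← hprof_rk Fs hflat, hFs.2]; exact h0
        have hFe : Fs = ∅ := flat_rk'_zero hM hflat hrk
        rw [hFe, deg_eq_zero (empty_inter _)]
        simp
      · rw [if_neg h0, Finset.sum_mul]
        refine Finset.sum_congr rfl fun Fs hFs => ?_
        rw [Finset.mem_filter] at hFs
        congr 1
        rw [hdTdef]; dsimp only
        rw [← hFs.2, hprof_deg]
    by_contra hlt
    push_neg at hlt
    have hz'K : z' ∈ K := by
      refine ⟨hz'0, hz'R, ?_, ?_⟩
      · intro l
        rw [hcon l]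
        exact hy'A l.1 l.2
      · have h1 : ∑ u, z' u ≤ ∑ u, z' u * rT u := by
          refine Finset.sum_le_sum fun u _ => ?_
          by_cases h0 : (u.2 : ℕ) = 0
          · rw [hz'def]; dsimp only; rw [if_pos h0]; simp
          · refine le_mul_of_one_le_right (hz'0 u) ?_
            rw [hrTdef]; dsimp only
            exact_mod_cast Nat.one_le_iff_ne_zero.mpr h0
        rw [hconval] at h1
        linarith
    have := hsmin z' hz'K
    rw [hvaldef] at this; dsimp only at this
    rw [hconval] at this
    linarith


end MainProof

/-- there is an optimal dual solution whose support is a chain of flats. -/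
theorem stmt_1 (M : Matroid α) [M.RankFinite] (hM : M.Loopless')
    (L : Finset (Set α)) (hL : ∀ l ∈ L, M.IsLine l)
    (w : Set α → ℝ) (hw : ∀ l ∈ L, 0 ≤ w l) :
    ∃ y : Set α →₀ ℝ,
      (∀ F, 0 ≤ y F) ∧
      (∀ F ∈ y.support, M.IsFlat F) ∧
      (∀ l ∈ L, w l ≤ aDual y l) ∧
      IsChain (· ⊆ ·) (y.support : Set (Set α)) ∧
      (∀ y' : Set α →₀ ℝ, (∀ F, 0 ≤ y' F) → (∀ F ∈ y'.support, M.IsFlat F) →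
        (∀ l ∈ L, w l ≤ aDual y' l) → rDual M y ≤ rDual M y') := by
  obtain ⟨y, h1, h2, h3, h4, h5⟩ := stmt_1' M hM L hL w hw
  exact ⟨y, h1, h2, h3, h4, h5⟩
end

section
/- Let w : L → ℝ and let y be a finitely supported function from the flats of M to ℝ with y ≥ 0 and a(y)_l ≥ w_l for all l ∈ L. Let S and T be flats with y_S > 0, y_T > 0, S ⊄ T and T ⊄ S, and let ε := min(y_S, y_T). Define y' := y + ε·(𝟙_{S∩T} + 𝟙_{cl(S∪T)} − 𝟙_S − 𝟙_T) (where 𝟙_F denotes the indicator of the flat F). Then y' ≥ 0, a(y')_l ≥ w_l for all l ∈ L, and r(y') ≤ r(y). -/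
open Set

variable {α : Type*}

section RankAux

variable {M : Matroid α} [M.RankFinite] {I J X Y l : Set α}

lemma rk'_eq_ncard (hI : M.IsBasis' I X) : M.rk' X = I.ncard := by
  have hub : ∀ n ∈ {n : ℕ | ∃ J, M.Indep J ∧ J ⊆ X ∧ J.ncard = n}, n ≤ I.ncard := by
    rintro n ⟨J, hJ, hJX, rfl⟩
    obtain ⟨J', hJ', hJJ'⟩ := hJ.subset_isBasis'_of_subset hJX
    have h1 : J'.ncard = I.ncard := by
      have := hJ'.encard_eq_encard hI
      simp [Set.ncard_def, this]
    exact le_trans (Set.ncard_le_ncard hJJ' hJ'.indep.finite) h1.le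
  have hmem : I.ncard ∈ {n : ℕ | ∃ J, M.Indep J ∧ J ⊆ X ∧ J.ncard = n} :=
    ⟨I, hI.indep, hI.subset, rfl⟩
  exact le_antisymm (csSup_le ⟨_, hmem⟩ hub) (le_csSup ⟨_, hub⟩ hmem)

lemma ncard_le_rk' (hJ : M.Indep J) (hJX : J ⊆ X) : J.ncard ≤ M.rk' X := by
  obtain ⟨I, hI⟩ := M.exists_isBasis' X
  rw [rk'_eq_ncard hI]
  obtain ⟨J', hJ', hJJ'⟩ := hJ.subset_isBasis'_of_subset hJX
  have h1 : J'.ncard = I.ncard := by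
    have := hJ'.encard_eq_encard hI
    simp [Set.ncard_def, this]
  exact le_trans (Set.ncard_le_ncard hJJ' hJ'.indep.finite) h1.le

lemma rk'_closure (X : Set α) : M.rk' (M.closure X) = M.rk' X := by
  obtain ⟨I, hI⟩ := M.exists_isBasis' X
  rw [rk'_eq_ncard hI, rk'_eq_ncard hI.isBasis_closure_right.isBasis']

lemma rk'_submod (S T : Set α) :
    M.rk' (S ∩ T) + M.rk' (M.closure (S ∪ T)) ≤ M.rk' S + M.rk' T := by
  obtain ⟨I, hI⟩ := M.exists_isBasis' (S ∩ T)
  obtain ⟨J, hJ, hIJ⟩ := hI.indep.subset_isBasis'_of_subset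
    (hI.subset.trans (inter_subset_left.trans subset_union_left))
  rw [rk'_closure, rk'_eq_ncard hI, rk'_eq_ncard hJ]
  have hJfin : J.Finite := hJ.indep.finite
  have h1 : (J ∩ S).ncard + (J ∩ T).ncard
      = ((J ∩ S) ∪ (J ∩ T)).ncard + ((J ∩ S) ∩ (J ∩ T)).ncard := by
    rw [Set.ncard_union_add_ncard_inter _ _ (hJfin.inter_of_left S) (hJfin.inter_of_left T)]
  have h2 : (J ∩ S) ∪ (J ∩ T) = J := by
    rw [← inter_union_distrib_left, inter_eq_left]
    exact hJ.subset
  have h3 : I ⊆ (J ∩ S) ∩ (J ∩ T) := by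
    intro x hx
    exact ⟨⟨hIJ hx, (hI.subset hx).1⟩, hIJ hx, (hI.subset hx).2⟩
  have h4 : I.ncard ≤ ((J ∩ S) ∩ (J ∩ T)).ncard :=
    Set.ncard_le_ncard h3 ((hJfin.inter_of_left S).inter_of_left _)
  have h5 : (J ∩ S).ncard ≤ M.rk' S := ncard_le_rk' (hJ.indep.inter_right S) inter_subset_right
  have h6 : (J ∩ T).ncard ≤ M.rk' T := ncard_le_rk' (hJ.indep.inter_right T) inter_subset_right
  rw [h2] at h1
  omega

end RankAux

section DegAux

variable {M : Matroid α} [M.RankFinite] {X Y l S T : Set α}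

lemma deg_le_two (X l : Set α) : deg X l ≤ 2 := by
  unfold deg; split_ifs <;> omega

lemma deg_mono (h : X ⊆ Y) (l : Set α) : deg X l ≤ deg Y l := by
  classical
  unfold deg
  by_cases hX : X ∩ l = ∅
  · rw [if_pos hX]; omega
  have hY : ¬ (Y ∩ l = ∅) := fun hY =>
    hX (subset_empty_iff.mp ((inter_subset_inter_left l h).trans hY.subset))
  rw [if_neg hX, if_neg hY]
  split_ifs with h1 h2 <;> try omega
  exact absurd (h1.trans h) h2

lemma deg_pos_of_mem {x : α} (hx : x ∈ X) (hxl : x ∈ l) : 1 ≤ deg X l := by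
  classical
  unfold deg
  rw [if_neg (Set.nonempty_iff_ne_empty.mp (⟨x, hx, hxl⟩ : (X ∩ l).Nonempty))]
  split_ifs <;> omega

lemma deg_eq_two (h1 : (X ∩ l).Nonempty) (h2 : l ⊆ X) : deg X l = 2 := by
  classical
  unfold deg
  rw [if_neg (by simp [h1.ne_empty]), if_pos h2]

/-- The key uncrossing inequality for degrees at a line. -/
lemma deg_key (hM : M.Loopless') (hl : M.IsLine l) (hS : M.IsFlat S) (hT : M.IsFlat T) :
    deg S l + deg T l ≤ deg (S ∩ T) l + deg (M.closure (S ∪ T)) l := by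
  classical
  set U := M.closure (S ∪ T) with hU
  have hSE : S ⊆ M.E := hS.subset_ground
  have hTE : T ⊆ M.E := hT.subset_ground
  have hSU : S ⊆ U := subset_union_left.trans (M.subset_closure (S ∪ T) (union_subset hSE hTE))
  have hTU : T ⊆ U := subset_union_right.trans (M.subset_closure (S ∪ T) (union_subset hSE hTE))
  by_cases hSe : S ∩ l = ∅
  · have : deg S l = 0 := by unfold deg; rw [if_pos hSe]
    rw [this]
    have := deg_mono hTU l
    omega
  by_cases hTe : T ∩ l = ∅
  · have : deg T l = 0 := by unfold deg; rw [if_pos hTe]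
    rw [this]
    have := deg_mono hSU l
    omega
  obtain ⟨p, hpS, hpl⟩ := nonempty_iff_ne_empty.2 hSe
  obtain ⟨q, hqT, hql⟩ := nonempty_iff_ne_empty.2 hTe
  by_cases hIe : (S ∩ T) ∩ l = ∅
  · -- hard case : show `l ⊆ U`
    have hpT : p ∉ T := fun h => (eq_empty_iff_forall_notMem.mp hIe p) ⟨⟨hpS, h⟩, hpl⟩
    have hqS : q ∉ S := fun h => (eq_empty_iff_forall_notMem.mp hIe q) ⟨⟨h, hqT⟩, hql⟩
    have hpE : p ∈ M.E := hSE hpS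
    have hqE : q ∈ M.E := hTE hqT
    have hip : M.Indep {p} := by
      rw [show ({p} : Set α) = insert p ∅ by simp, Matroid.insert_indep_iff]
      refine ⟨M.empty_indep, fun _ => ?_⟩
      rw [show M.closure ∅ = ∅ from hM]
      simpa using hpE
    have hqclp : q ∉ M.closure {p} := by
      intro h
      have : M.closure {p} ⊆ S := by
        rw [← hS.closure]
        exact M.closure_subset_closure (by simpa using hpS)
      exact hqS (this h)
    have hipq : M.Indep {p, q} := by
      rw [show ({p, q} : Set α) = insert q {p} by simp [Set.pair_comm], Matroid.insert_indep_iff]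
      refine ⟨hip, fun _ => ⟨hqE, hqclp⟩⟩
    have hpq : p ≠ q := by
      rintro rfl; exact hqclp (M.subset_closure {p} (by simpa using hpE) rfl)
    obtain ⟨J, hJ, hpqJ⟩ := hipq.subset_isBasis'_of_subset
      (by rintro x (rfl | rfl); exacts [hpl, hql])
    have hJcard : J.ncard ≤ 2 := by
      have := rk'_eq_ncard hJ
      rcases hl.2 with h | h <;> omega
    have hJeq : ({p, q} : Set α) = J :=
      Set.eq_of_subset_of_ncard_le hpqJ
        (by rw [Set.ncard_pair hpq] at *; exact hJcard) hJ.indep.finite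
    have hlU : l ⊆ U := by
      have h1 : l ⊆ M.closure l := M.subset_closure l hl.1
      have h2 : M.closure J = M.closure l := hJ.closure_eq_closure
      have h3 : M.closure J ⊆ U := by
        rw [hU, ← M.closure_closure (S ∪ T)]
        refine M.closure_subset_closure ?_
        rw [← hJeq]
        rintro x (rfl | rfl)
        · exact M.subset_closure (S ∪ T) (union_subset hSE hTE) (Or.inl hpS)
        · exact M.subset_closure (S ∪ T) (union_subset hSE hTE) (Or.inr hqT)
      exact h1.trans (h2 ▸ h3)
    have hU2 : deg U l = 2 := deg_eq_two ⟨p, hSU hpS, hpl⟩ hlU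
    have hS2 : deg S l ≤ 1 := by
      unfold deg
      rw [if_neg hSe, if_neg (fun h => hqS (h hql))]
    have hT2 : deg T l ≤ 1 := by
      unfold deg
      rw [if_neg hTe, if_neg (fun h => hpT (h hpl))]
    omega
  · obtain ⟨x, hxST, hxl⟩ := nonempty_iff_ne_empty.2 hIe
    have hI1 : 1 ≤ deg (S ∩ T) l := deg_pos_of_mem hxST hxl
    have hU1 : 1 ≤ deg U l := deg_pos_of_mem (hSU hxST.1) hxl
    by_cases h2S : l ⊆ S
    · by_cases h2T : l ⊆ T
      · have : deg (S ∩ T) l = 2 := deg_eq_two ⟨x, hxST, hxl⟩ (subset_inter h2S h2T)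
        have hU2 : deg U l = 2 := deg_eq_two ⟨x, hSU hxST.1, hxl⟩ (h2S.trans hSU)
        have := deg_le_two S l; have := deg_le_two T l
        omega
      · have hU2 : deg U l = 2 := deg_eq_two ⟨x, hSU hxST.1, hxl⟩ (h2S.trans hSU)
        have hT1 : deg T l ≤ 1 := by unfold deg; rw [if_neg hTe, if_neg h2T]
        have := deg_le_two S l
        omega
    · have hS1 : deg S l ≤ 1 := by unfold deg; rw [if_neg hSe, if_neg h2S]
      by_cases h2T : l ⊆ T
      · have hU2 : deg U l = 2 := deg_eq_two ⟨x, hSU hxST.1, hxl⟩ (h2T.trans hTU)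
        have := deg_le_two T l
        omega
      · have hT1 : deg T l ≤ 1 := by unfold deg; rw [if_neg hTe, if_neg h2T]
        omega

end DegAux

/-- Evaluating a linear functional on the uncrossed dual solution. -/
lemma phi_eval (d : Set α → ℝ) (y : Set α →₀ ℝ) (ε : ℝ) (A B C D : Set α) :
    (y + ε • (Finsupp.single A (1:ℝ) + Finsupp.single B 1
        - Finsupp.single C 1 - Finsupp.single D 1)).sum (fun F c => c * d F)
    = y.sum (fun F c => c * d F) + ε * (d A + d B - d C - d D) := by
  rw [Finsupp.sum_add_index' (h := fun F c => c * d F) (fun a => zero_mul _)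
    (fun a b1 b2 => add_mul b1 b2 (d a))]
  congr 1
  rw [smul_sub, smul_sub, smul_add, Finsupp.smul_single, Finsupp.smul_single,
    Finsupp.smul_single, Finsupp.smul_single, smul_eq_mul, mul_one]
  rw [Finsupp.sum_sub_index (fun a b1 b2 => sub_mul b1 b2 (d a)),
      Finsupp.sum_sub_index (fun a b1 b2 => sub_mul b1 b2 (d a)),
      Finsupp.sum_add_index' (h := fun F c => c * d F) (fun a => zero_mul _)
        (fun a b1 b2 => add_mul b1 b2 (d a)),
      Finsupp.sum_single_index (h := fun F c => c * d F) (zero_mul _),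
      Finsupp.sum_single_index (h := fun F c => c * d F) (zero_mul _),
      Finsupp.sum_single_index (h := fun F c => c * d F) (zero_mul _),
      Finsupp.sum_single_index (h := fun F c => c * d F) (zero_mul _)]
  ring

/-- uncrossing two flats in the support of a feasible dual solution
preserves nonnegativity and feasibility and does not increase the dual value. -/
theorem stmt_2 (M : Matroid α) [M.RankFinite] (hM : M.Loopless')
    (L : Finset (Set α)) (hL : ∀ l ∈ L, M.IsLine l)
    (w : Set α → ℝ) (y : Set α →₀ ℝ)
    (hy0 : ∀ F, 0 ≤ y F) (hyflat : ∀ F ∈ y.support, M.IsFlat F)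
    (hyw : ∀ l ∈ L, w l ≤ aDual y l)
    (S T : Set α) (hS : M.IsFlat S) (hT : M.IsFlat T)
    (hyS : 0 < y S) (hyT : 0 < y T) (hST : ¬ S ⊆ T) (hTS : ¬ T ⊆ S)
    (ε : ℝ) (hε : ε = min (y S) (y T))
    (y' : Set α →₀ ℝ)
    (hy' : y' = y + ε • (Finsupp.single (S ∩ T) (1 : ℝ)
        + Finsupp.single (M.closure (S ∪ T)) (1 : ℝ)
        - Finsupp.single S (1 : ℝ) - Finsupp.single T (1 : ℝ))) :
    (∀ F, 0 ≤ y' F) ∧ (∀ l ∈ L, w l ≤ aDual y' l) ∧ rDual M y' ≤ rDual M y := by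
  classical
  have hε0 : 0 ≤ ε := by rw [hε]; exact le_min hyS.le hyT.le
  have hεS : ε ≤ y S := by rw [hε]; exact min_le_left _ _
  have hεT : ε ≤ y T := by rw [hε]; exact min_le_right _ _
  have hSE : S ⊆ M.E := hS.subset_ground
  have hTE : T ⊆ M.E := hT.subset_ground
  have hTU : T ⊆ M.closure (S ∪ T) :=
    subset_union_right.trans (M.subset_closure (S ∪ T) (union_subset hSE hTE))
  have hSU : S ⊆ M.closure (S ∪ T) :=
    subset_union_left.trans (M.subset_closure (S ∪ T) (union_subset hSE hTE))
  have hSneT : S ≠ T := fun h => hST h.subset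
  have hIS : S ∩ T ≠ S := fun h => hST (inter_eq_left.mp h)
  have hIT : S ∩ T ≠ T := fun h => hTS (inter_eq_right.mp h)
  have hUS : M.closure (S ∪ T) ≠ S := fun h => hTS (h ▸ hTU)
  have hUT : M.closure (S ∪ T) ≠ T := fun h => hST (h ▸ hSU)
  refine ⟨?_, ?_, ?_⟩
  · -- nonnegativity
    intro F
    rw [hy']
    simp only [Finsupp.coe_add, Pi.add_apply, Finsupp.coe_smul, Pi.smul_apply,
      Finsupp.coe_sub, Pi.sub_apply, Finsupp.single_apply, smul_eq_mul]
    by_cases hFS : F = S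
    · subst hFS
      rw [if_neg hIS, if_neg hUS, if_pos rfl, if_neg (Ne.symm hSneT)]
      linarith
    by_cases hFT : F = T
    · subst hFT
      rw [if_neg hIT, if_neg hUT, if_neg hSneT, if_pos rfl]
      linarith
    rw [if_neg (show ¬ S = F from fun h => hFS h.symm),
      if_neg (show ¬ T = F from fun h => hFT h.symm)]
    have := hy0 F
    split_ifs <;> nlinarith
  · -- feasibility
    intro l hl
    have key := deg_key hM (hL l hl) hS hT
    have keyR : (deg S l : ℝ) + (deg T l : ℝ)
        ≤ (deg (S ∩ T) l : ℝ) + (deg (M.closure (S ∪ T)) l : ℝ) := by exact_mod_cast key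
    have hεkey : 0 ≤ ε * ((deg (S ∩ T) l : ℝ) + (deg (M.closure (S ∪ T)) l : ℝ)
        - (deg S l : ℝ) - (deg T l : ℝ)) := mul_nonneg hε0 (by linarith)
    have h := hyw l hl
    unfold aDual at h ⊢
    rw [hy', phi_eval]
    linarith
  · -- dual value
    have key := rk'_submod (M := M) S T
    have keyR : (M.rk' (S ∩ T) : ℝ) + (M.rk' (M.closure (S ∪ T)) : ℝ)
        ≤ (M.rk' S : ℝ) + (M.rk' T : ℝ) := by exact_mod_cast key
    have hεkey : ε * ((M.rk' (S ∩ T) : ℝ) + (M.rk' (M.closure (S ∪ T)) : ℝ)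
        - (M.rk' S : ℝ) - (M.rk' T : ℝ)) ≤ 0 :=
      mul_nonpos_of_nonneg_of_nonpos hε0 (by linarith)
    unfold rDual
    rw [hy', phi_eval]
    linarith
end

section
/- Let n ≥ 1 and let D be an n × n integer matrix all of whose entries lie in {0, 1, 2}, such that every column sum of D is at most 2 and det D ≠ 0. Let b ∈ ℤⁿ and let x ∈ ℚⁿ be the unique solution of Dx = b. Then 2x ∈ ℤⁿ, i.e., every entry of x is half-integer. -/
open Set

variable {α : Type*}

lemma key_lemma {n : ℕ} (D : Matrix (Fin n) (Fin n) ℤ)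
    (hent : ∀ i j, D i j = 0 ∨ D i j = 1 ∨ D i j = 2)
    (hcol : ∀ j, ∑ i, D i j ≤ 2)
    (hdet : D.det ≠ 0) (i : Fin n) :
    ∃ w : Fin n → ℤ, D.mulVec w = fun k => if k = i then 2 else 0 := by
  classical
  have hpos : ∀ a j, 0 ≤ D a j := by
    intro a j; rcases hent a j with h | h | h <;> omega
  have pair_le : ∀ (u v : Fin n) (j : Fin n), u ≠ v → D u j + D v j ≤ 2 := by
    intro u v j huv
    calc D u j + D v j = ∑ a ∈ ({u, v} : Finset (Fin n)), D a j := by rw [Finset.sum_pair huv]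
    _ ≤ ∑ a, D a j := Finset.sum_le_sum_of_subset_of_nonneg (Finset.subset_univ _)
        (fun a _ _ => hpos a j)
    _ ≤ 2 := hcol j
  have triple_le : ∀ (u v w : Fin n) (j : Fin n), u ≠ v → u ≠ w → v ≠ w →
      D u j + D v j + D w j ≤ 2 := by
    intro u v w j huv huw hvw
    have h1 : ∑ a ∈ ({u, v, w} : Finset (Fin n)), D a j = D u j + (D v j + D w j) := by
      rw [Finset.sum_insert (by simp [huv, huw]), Finset.sum_pair hvw]
    calc D u j + D v j + D w j = ∑ a ∈ ({u, v, w} : Finset (Fin n)), D a j := by rw [h1]; ring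
    _ ≤ ∑ a, D a j := Finset.sum_le_sum_of_subset_of_nonneg (Finset.subset_univ _)
        (fun a _ _ => hpos a j)
    _ ≤ 2 := hcol j
  have fact1 : ∀ (u : Fin n) (j : Fin n), D u j = 2 → ∀ v, v ≠ u → D v j = 0 := by
    intro u j h2 v hvu
    have := pair_le u v j (Ne.symm hvu)
    have := hpos v j
    omega
  have fact2 : ∀ (u v : Fin n) (j : Fin n), u ≠ v → D u j = 1 → D v j = 1 →
      ∀ w, w ≠ u → w ≠ v → D w j = 0 := by
    intro u v j huv h1 h2 w hwu hwv
    have := triple_le u v w j huv (Ne.symm hwu) (Ne.symm hwv)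
    have := hpos w j
    omega
  -- the adjacency relation via edge columns
  set r : Fin n → Fin n → Prop := fun u v => u ≠ v ∧ ∃ j, D u j = 1 ∧ D v j = 1 with hr
  -- the indicator column fact
  have hind : ∀ (j : Fin n) (c : ℤ),
      D.mulVec (fun m => if m = j then c else 0) = fun k => c * D k j := by
    intro j c
    funext k
    simp [Matrix.mulVec, dotProduct, mul_ite, Finset.sum_ite_eq', mul_comm]
  -- walk lemma
  have walk : ∀ v, Relation.ReflTransGen r i v → ∃ ε : ℤ, (ε = 1 ∨ ε = -1) ∧
      ∃ w, D.mulVec w = fun k => (if k = i then 1 else 0) + ε * (if k = v then 1 else 0) := by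
    intro v hv
    induction hv with
    | refl =>
      refine ⟨-1, Or.inr rfl, 0, ?_⟩
      funext k
      rw [Matrix.mulVec_zero]
      by_cases hk : k = i <;> simp [hk]
    | @tail b c hib hbc ih =>
      obtain ⟨ε, hε, w, hw⟩ := ih
      obtain ⟨hne, j, hbj, hcj⟩ := hbc
      have colj : ∀ k, D k j = (if k = b then 1 else 0) + (if k = c then 1 else 0) := by
        intro k
        by_cases hk : k = b
        · subst hk; simp [hbj, hne]
        · by_cases hk' : k = c
          · subst hk'; simp [hcj, Ne.symm hne]
          · simp [hk, hk', fact2 b c j hne hbj hcj k hk hk']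
      refine ⟨-ε, by rcases hε with h | h <;> simp [h], w - ε • (fun m => if m = j then 1 else 0), ?_⟩
      rw [Matrix.mulVec_sub, Matrix.mulVec_smul, hw, hind j 1]
      funext k
      have := colj k
      simp only [Pi.sub_apply, Pi.smul_apply, smul_eq_mul, one_mul]
      rw [this]
      ring
  by_cases hA : ∃ u, Relation.ReflTransGen r i u ∧
      ∃ w, D.mulVec w = fun k => if k = u then (2:ℤ) else 0
  · obtain ⟨u, hu, w2, hw2⟩ := hA
    obtain ⟨ε, hε, w1, hw1⟩ := walk u hu
    refine ⟨(2:ℤ) • w1 - ε • w2, ?_⟩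
    rw [Matrix.mulVec_sub, Matrix.mulVec_smul, Matrix.mulVec_smul, hw1, hw2]
    funext k
    simp only [Pi.sub_apply, Pi.smul_apply, smul_eq_mul]
    have h2e : (if k = u then (2:ℤ) else 0) = 2 * (if k = u then 1 else 0) := by
      split <;> ring
    have h2i : (if k = i then (2:ℤ) else 0) = 2 * (if k = i then 1 else 0) := by
      split <;> ring
    rw [h2e, h2i]
    rcases hε with h | h <;> subst h <;> ring
  · exfalso
    push_neg at hA
    have hchoice : ∀ u : Fin n, ∃ ε : ℤ,
        (Relation.ReflTransGen r i u → (ε = 1 ∨ ε = -1) ∧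
          ∃ w, D.mulVec w = fun k => (if k = i then 1 else 0) + ε * (if k = u then 1 else 0)) ∧
        (¬ Relation.ReflTransGen r i u → ε = 0) := by
      intro u
      by_cases h : Relation.ReflTransGen r i u
      · obtain ⟨ε, hε, hw⟩ := walk u h
        exact ⟨ε, fun _ => ⟨hε, hw⟩, fun h' => absurd h h'⟩
      · exact ⟨0, fun h' => absurd h' h, fun _ => rfl⟩
    choose ε hεr hε0 using hchoice
    have hcolzero : ∀ j, ∑ u, ε u * D u j = 0 := by
      intro j
      by_cases hj : ∃ u, Relation.ReflTransGen r i u ∧ D u j ≠ 0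
      · obtain ⟨u, hru, hDu⟩ := hj
        rcases hent u j with h0 | h1 | h2
        · exact absurd h0 hDu
        · by_cases hv : ∃ v, v ≠ u ∧ D v j = 1
          · obtain ⟨v, hvu, hv1⟩ := hv
            have hruv : r u v := ⟨Ne.symm hvu, j, h1, hv1⟩
            have hrv : Relation.ReflTransGen r i v := hru.tail hruv
            obtain ⟨hεu, wu, hwu⟩ := hεr u hru
            obtain ⟨hεv, wv, hwv⟩ := hεr v hrv
            have colj : ∀ k, D k j = (if k = u then 1 else 0) + (if k = v then 1 else 0) := by
              intro k
              by_cases hk : k = u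
              · subst hk; simp [h1, Ne.symm hvu]
              · by_cases hk' : k = v
                · subst hk'; simp [hv1, hvu]
                · simp [hk, hk', fact2 u v j (Ne.symm hvu) h1 hv1 k hk hk']
            by_cases hsame : ε u = ε v
            · refine absurd ?_ (hA i Relation.ReflTransGen.refl
                (ε u • (ε u • (wu + wv) - fun m => if m = j then 1 else 0)))
              rw [Matrix.mulVec_smul, Matrix.mulVec_sub, Matrix.mulVec_smul,
                Matrix.mulVec_add, hwu, hwv, hind j 1]
              funext k
              have hcj := colj k
              simp only [Pi.smul_apply, Pi.sub_apply, Pi.add_apply, smul_eq_mul, one_mul]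
              rw [hcj, ← hsame]
              have h2i : (if k = i then (2:ℤ) else 0) = 2 * (if k = i then 1 else 0) := by
                split <;> ring
              rw [h2i]
              rcases hεu with h | h <;> rw [h] <;> ring
            · have hopp : ε v = -ε u := by
                rcases hεu with h | h <;> rcases hεv with h' | h' <;>
                  simp [h, h'] at hsame ⊢
              have hterm : ∀ k, ε k * D k j =
                  (if k = u then ε u else 0) + (if k = v then ε v else 0) := by
                intro k
                by_cases hk : k = u
                · subst hk; simp [h1, Ne.symm hvu]
                · by_cases hk' : k = v
                  · subst hk'; simp [hv1, hvu]
                  · simp [hk, hk', fact2 u v j (Ne.symm hvu) h1 hv1 k hk hk']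
              rw [Finset.sum_congr rfl (fun k _ => hterm k), Finset.sum_add_distrib]
              simp [Finset.sum_ite_eq', hopp]
          · push_neg at hv
            refine absurd ?_ (hA u hru (fun m => if m = j then 2 else 0))
            rw [hind j 2]
            funext k
            by_cases hk : k = u
            · subst hk; simp [h1]
            · have hDk : D k j = 0 := by
                rcases hent k j with h' | h' | h'
                · exact h'
                · exact absurd h' (hv k hk)
                · have := fact1 k j h' u (Ne.symm hk); omega
              simp [hk, hDk]
        · refine absurd ?_ (hA u hru (fun m => if m = j then 1 else 0))
          rw [hind j 1]
          funext k
          by_cases hk : k = u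
          · subst hk; simp [h2]
          · simp [hk, fact1 u j h2 k hk]
      · push_neg at hj
        refine Finset.sum_eq_zero fun u _ => ?_
        by_cases h : Relation.ReflTransGen r i u
        · simp [hj u h]
        · simp [hε0 u h]
    have hzero : D.det = 0 := by
      rw [← Matrix.exists_vecMul_eq_zero_iff]
      refine ⟨ε, ?_, ?_⟩
      · intro h
        have hi := hεr i Relation.ReflTransGen.refl
        have : ε i = 0 := congrFun h i
        rcases hi.1 with h' | h' <;> omega
      · funext j
        simpa [Matrix.vecMul, dotProduct] using hcolzero j
    exact hdet hzero

/-- a nonsingular {0,1,2}-matrix with column sums at most 2 has a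
half-integer solution to `Dx = b` for every integer right-hand side `b`. -/
theorem stmt_4 {n : ℕ} (hn : 1 ≤ n) (D : Matrix (Fin n) (Fin n) ℤ)
    (hent : ∀ i j, D i j = 0 ∨ D i j = 1 ∨ D i j = 2)
    (hcol : ∀ j, ∑ i, D i j ≤ 2)
    (hdet : D.det ≠ 0)
    (b : Fin n → ℤ) (x : Fin n → ℚ)
    (hx : (D.map (Int.cast : ℤ → ℚ)).mulVec x = fun i => (b i : ℚ)) :
    ∀ i, ∃ m : ℤ, 2 * x i = (m : ℚ) := by
  classical
  choose w hw using fun i => key_lemma D hent hcol hdet i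
  set Dq : Matrix (Fin n) (Fin n) ℚ := D.map (Int.cast : ℤ → ℚ) with hDq
  set Wq : Matrix (Fin n) (Fin n) ℚ :=
    Matrix.of (fun a c => ((w c a : ℤ) : ℚ)) with hWq
  have hmul : Dq * Wq = (2 : ℚ) • 1 := by
    ext k c
    simp only [Matrix.mul_apply, hDq, hWq, Matrix.map_apply, Matrix.of_apply,
      Matrix.smul_apply, Matrix.one_apply, smul_eq_mul]
    have hthis := congrFun (hw c) k
    simp only [Matrix.mulVec, dotProduct] at hthis
    have hcast : ((∑ j, D k j * w c j : ℤ) : ℚ) = ∑ j, (D k j : ℚ) * (w c j : ℚ) := by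
      push_cast; ring
    rw [← hcast, hthis]
    by_cases hk : k = c <;> simp [hk]
  have hdetq : IsUnit Dq.det := by
    rw [isUnit_iff_ne_zero]
    have : Dq.det = ((D.det : ℤ) : ℚ) := by
      rw [hDq]
      exact ((Int.castRingHom ℚ).map_det D).symm
    rw [this]
    exact_mod_cast hdet
  have hWeq : Wq = (2 : ℚ) • Dq⁻¹ := by
    calc Wq = (Dq⁻¹ * Dq) * Wq := by rw [Matrix.nonsing_inv_mul Dq hdetq, Matrix.one_mul]
    _ = Dq⁻¹ * (Dq * Wq) := by rw [Matrix.mul_assoc]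
    _ = (2 : ℚ) • Dq⁻¹ := by rw [hmul, Matrix.mul_smul, Matrix.mul_one]
  have hmul2 : Wq * Dq = (2 : ℚ) • 1 := by
    rw [hWeq, Matrix.smul_mul, Matrix.nonsing_inv_mul Dq hdetq]
  have hfinal : Wq.mulVec (fun i => (b i : ℚ)) = (2 : ℚ) • x := by
    rw [← hx, Matrix.mulVec_mulVec, hmul2, Matrix.smul_mulVec, Matrix.one_mulVec]
  intro i
  refine ⟨∑ j, w j i * b j, ?_⟩
  have := congrFun hfinal i
  simp only [Matrix.mulVec, dotProduct, Pi.smul_apply, smul_eq_mul, hWq, Matrix.of_apply] at this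
  rw [← this]
  push_cast
  ring
end

section
/- Let ∅ = F_0 ⊂ F_1 ⊂ ⋯ ⊂ F_k ⊂ F_{k+1} = E be a chain of flats of M and let x ∈ ℝ^L with x ≥ 0 satisfy: for every choice of sets S_0,…,S_k with S_i ⊆ F_{i+1} \ F_i and S_i ∪ F_i a flat of M, one has ∑_{l∈L} a(S_0 ∪ ⋯ ∪ S_k)_l x_l ≤ ∑_{i=0}^{k} (r(S_i ∪ F_i) − r(F_i)). If moreover 2·∑_{l∈L} x_l = r(E), then ∑_{l∈L} a(F_i)_l x_l = r(F_i) for every i = 1,…,k. -/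
open Set

variable {α : Type*}

lemma rk'_empty (M : Matroid α) : M.rk' (∅ : Set α) = 0 := by
  have h : {n : ℕ | ∃ I, M.Indep I ∧ I ⊆ (∅ : Set α) ∧ I.ncard = n} = {0} := by
    ext n
    simp only [Set.mem_setOf_eq, Set.mem_singleton_iff]
    constructor
    · rintro ⟨I, _, hsub, hc⟩
      rw [Set.subset_empty_iff] at hsub
      subst hsub
      simpa using hc.symm
    · rintro rfl
      exact ⟨∅, M.empty_indep, subset_rfl, Set.ncard_empty _⟩
  rw [Matroid.rk', h, csSup_singleton]

lemma line_nonempty {M : Matroid α} {l : Set α} (hl : M.IsLine l) : l.Nonempty := by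
  rw [Set.nonempty_iff_ne_empty]
  rintro rfl
  rcases hl.2 with h | h <;> rw [rk'_empty] at h <;> omega

lemma deg_eq_two_s10 {X l : Set α} (hl : l.Nonempty) (h : l ⊆ X) : deg X l = 2 := by
  unfold deg
  rw [Set.inter_eq_right.mpr h, if_neg hl.ne_empty, if_pos h]

lemma deg_pos {X l : Set α} (h : (X ∩ l).Nonempty) : 1 ≤ deg X l := by
  unfold deg
  rw [if_neg h.ne_empty]
  split_ifs <;> omega

lemma deg_add_ge {X E l : Set α} (hlE : l ⊆ E) (hl : l.Nonempty) :
    2 ≤ deg X l + deg (E \ X) l := by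
  by_cases hx : X ∩ l = ∅
  · have hsub : l ⊆ E \ X := fun b hb =>
      ⟨hlE hb, fun hbX => Set.eq_empty_iff_forall_notMem.1 hx b ⟨hbX, hb⟩⟩
    have h2 := deg_eq_two_s10 hl hsub
    omega
  · by_cases hlX : l ⊆ X
    · have h2 := deg_eq_two_s10 hl hlX
      omega
    · have h1 : 1 ≤ deg X l := deg_pos (Set.nonempty_iff_ne_empty.2 hx)
      obtain ⟨b, hb, hbX⟩ := Set.not_subset.1 hlX
      have h2 : 1 ≤ deg (E \ X) l := deg_pos ⟨b, ⟨hlE hb, hbX⟩, hb⟩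
      omega

lemma sum_ite_tele (g : ℕ → ℝ) (j n : ℕ) (hj : j ≤ n) :
    ∑ i ∈ Finset.range n, (if i < j then g (i+1) - g i else 0) = g j - g 0 := by
  classical
  rw [← Finset.sum_filter]
  have h : (Finset.range n).filter (fun i => i < j) = Finset.range j := by
    ext i
    simp only [Finset.mem_filter, Finset.mem_range]
    omega
  rw [h, Finset.sum_range_sub]

lemma sum_ite_tele' (g : ℕ → ℝ) (j n : ℕ) (hj : j ≤ n) :
    ∑ i ∈ Finset.range n, (if i < j then 0 else g (i+1) - g i) = g n - g j := by
  classical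
  have h1 := sum_ite_tele g j n hj
  have h2 : ∑ i ∈ Finset.range n,
      ((if i < j then g (i+1) - g i else 0) + (if i < j then 0 else g (i+1) - g i))
      = g n - g 0 := by
    have he : ∀ i, (if i < j then g (i+1) - g i else 0) +
        (if i < j then 0 else g (i+1) - g i) = g (i+1) - g i := by
      intro i; split_ifs <;> ring
    simp_rw [he]
    exact Finset.sum_range_sub g n
  rw [Finset.sum_add_distrib, h1] at h2
  linarith

/-- a perfect fractional matching of `(M⋆𝓕, L)` is tight on every flat
of the chain 𝓕. -/
theorem stmt_10 (M : Matroid α) [M.RankFinite] (hM : M.Loopless')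
    (L : Finset (Set α)) (hL : ∀ l ∈ L, M.IsLine l)
    (k : ℕ) (F : ℕ → Set α) (hF0 : F 0 = ∅) (hFE : F (k+1) = M.E)
    (hFflat : ∀ i ≤ k+1, M.IsFlat (F i)) (hFmono : ∀ i ≤ k, F i ⊂ F (i+1))
    (x : Set α → ℝ) (hx0 : ∀ l ∈ L, 0 ≤ x l)
    (hstar : ∀ S : ℕ → Set α,
      (∀ i ≤ k, S i ⊆ F (i+1) \ F i ∧ M.IsFlat (S i ∪ F i)) →
      ∑ l ∈ L, (deg (⋃ i ∈ Finset.range (k+1), S i) l : ℝ) * x l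
        ≤ ∑ i ∈ Finset.range (k+1), ((M.rk' (S i ∪ F i) : ℝ) - (M.rk' (F i) : ℝ)))
    (hperf : 2 * ∑ l ∈ L, x l = (M.rk' M.E : ℝ)) :
    ∀ i, 1 ≤ i → i ≤ k →
      ∑ l ∈ L, (deg (F i) l : ℝ) * x l = (M.rk' (F i) : ℝ) := by
  classical
  intro j _ hjk
  -- monotonicity of the chain
  have hmono : ∀ d a, a + d ≤ k+1 → F a ⊆ F (a+d) := by
    intro d
    induction d with
    | zero => intro a _; exact subset_rfl
    | succ d ih =>
      intro a h
      exact (ih a (by omega)).trans (hFmono (a+d) (by omega)).subset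
  -- union of consecutive differences
  have hUnion : ∀ m a, a + m ≤ k+1 →
      (⋃ i ∈ Finset.Ico a (a+m), (F (i+1) \ F i)) = F (a+m) \ F a := by
    intro m
    induction m with
    | zero => intro a _; simp
    | succ m ih =>
      intro a h
      rw [show a + (m+1) = (a+m)+1 from rfl,
        Nat.Ico_succ_right_eq_insert_Ico (Nat.le_add_right a m),
        Finset.set_biUnion_insert _ _ _, ih a (by omega)]
      exact Set.diff_union_diff_cancel ((hFmono (a+m) (by omega)).subset)
        (hmono m a (by omega))
  have hrF0 : M.rk' (F 0) = 0 := by rw [hF0, rk'_empty]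
  -- Application A : upper bound for F j
  have hA := hstar (fun i => if i < j then F (i+1) \ F i else ∅) (by
    intro i hi
    by_cases h : i < j
    · simp only [if_pos h]
      refine ⟨subset_rfl, ?_⟩
      rw [Set.diff_union_of_subset ((hFmono i hi).subset)]
      exact hFflat (i+1) (by omega)
    · simp only [if_neg h]
      exact ⟨Set.empty_subset _, by rw [Set.empty_union]; exact hFflat i (by omega)⟩)
  have hU1 : (⋃ i ∈ Finset.range (k+1), (if i < j then F (i+1) \ F i else ∅)) = F j := by
    have h1 : (⋃ i ∈ Finset.range (k+1), (if i < j then F (i+1) \ F i else ∅))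
        = ⋃ i ∈ Finset.Ico 0 j, (F (i+1) \ F i) := by
      ext y
      simp only [Set.mem_iUnion, Finset.mem_range, Finset.mem_Ico, exists_prop]
      constructor
      · rintro ⟨i, hi, hy⟩
        by_cases h : i < j
        · rw [if_pos h] at hy; exact ⟨i, ⟨Nat.zero_le _, h⟩, hy⟩
        · rw [if_neg h] at hy; exact hy.elim
      · rintro ⟨i, ⟨-, hij⟩, hy⟩
        exact ⟨i, by omega, by rw [if_pos hij]; exact hy⟩
    rw [h1]
    have h2 := hUnion j 0 (by omega)
    simp only [Nat.zero_add] at h2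
    rw [h2, hF0, Set.diff_empty]
  have hR1 : ∑ i ∈ Finset.range (k+1),
      ((M.rk' ((if i < j then F (i+1) \ F i else ∅) ∪ F i) : ℝ) - (M.rk' (F i) : ℝ))
      = (M.rk' (F j) : ℝ) := by
    have heq : ∀ i ∈ Finset.range (k+1),
        ((M.rk' ((if i < j then F (i+1) \ F i else ∅) ∪ F i) : ℝ) - (M.rk' (F i) : ℝ))
        = (if i < j then ((M.rk' (F (i+1)) : ℝ) - (M.rk' (F i) : ℝ)) else 0) := by
      intro i hi
      rw [Finset.mem_range] at hi
      by_cases h : i < j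
      · rw [if_pos h, if_pos h, Set.diff_union_of_subset ((hFmono i (by omega)).subset)]
      · rw [if_neg h, if_neg h, Set.empty_union]; ring
    rw [Finset.sum_congr rfl heq,
      sum_ite_tele (fun i => (M.rk' (F i) : ℝ)) j (k+1) (by omega)]
    simp [hrF0]
  rw [hU1, hR1] at hA
  -- Application B : upper bound for E \ F j
  have hB := hstar (fun i => if i < j then ∅ else F (i+1) \ F i) (by
    intro i hi
    by_cases h : i < j
    · simp only [if_pos h]
      exact ⟨Set.empty_subset _, by rw [Set.empty_union]; exact hFflat i (by omega)⟩
    · simp only [if_neg h]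
      refine ⟨subset_rfl, ?_⟩
      rw [Set.diff_union_of_subset ((hFmono i hi).subset)]
      exact hFflat (i+1) (by omega))
  have hU2 : (⋃ i ∈ Finset.range (k+1), (if i < j then ∅ else F (i+1) \ F i))
      = M.E \ F j := by
    have h1 : (⋃ i ∈ Finset.range (k+1), (if i < j then ∅ else F (i+1) \ F i))
        = ⋃ i ∈ Finset.Ico j (k+1), (F (i+1) \ F i) := by
      ext y
      simp only [Set.mem_iUnion, Finset.mem_range, Finset.mem_Ico, exists_prop]
      constructor
      · rintro ⟨i, hi, hy⟩
        by_cases h : i < j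
        · rw [if_pos h] at hy; exact hy.elim
        · rw [if_neg h] at hy; exact ⟨i, ⟨by omega, hi⟩, hy⟩
      · rintro ⟨i, ⟨hij, hi⟩, hy⟩
        exact ⟨i, hi, by rw [if_neg (by omega)]; exact hy⟩
    rw [h1]
    have h2 := hUnion (k+1-j) j (by omega)
    rw [show j + (k+1-j) = k+1 by omega] at h2
    rw [h2, hFE]
  have hR2 : ∑ i ∈ Finset.range (k+1),
      ((M.rk' ((if i < j then ∅ else F (i+1) \ F i) ∪ F i) : ℝ) - (M.rk' (F i) : ℝ))
      = (M.rk' M.E : ℝ) - (M.rk' (F j) : ℝ) := by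
    have heq : ∀ i ∈ Finset.range (k+1),
        ((M.rk' ((if i < j then ∅ else F (i+1) \ F i) ∪ F i) : ℝ) - (M.rk' (F i) : ℝ))
        = (if i < j then 0 else ((M.rk' (F (i+1)) : ℝ) - (M.rk' (F i) : ℝ))) := by
      intro i hi
      rw [Finset.mem_range] at hi
      by_cases h : i < j
      · rw [if_pos h, if_pos h, Set.empty_union]; ring
      · rw [if_neg h, if_neg h, Set.diff_union_of_subset ((hFmono i (by omega)).subset)]
    rw [Finset.sum_congr rfl heq,
      sum_ite_tele' (fun i => (M.rk' (F i) : ℝ)) j (k+1) (by omega), hFE]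
  rw [hU2, hR2] at hB
  -- combine
  have key3 : (M.rk' M.E : ℝ) ≤
      ∑ l ∈ L, (deg (F j) l : ℝ) * x l + ∑ l ∈ L, (deg (M.E \ F j) l : ℝ) * x l := by
    rw [← hperf, ← Finset.sum_add_distrib, Finset.mul_sum]
    apply Finset.sum_le_sum
    intro l hl
    have hline := hL l hl
    have hd : (2 : ℝ) ≤ (deg (F j) l : ℝ) + (deg (M.E \ F j) l : ℝ) := by
      have := deg_add_ge (X := F j) hline.1 (line_nonempty hline)
      push_cast
      exact_mod_cast this
    nlinarith [hx0 l hl]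
  linarith [hA, hB, key3]
end

section
/- Let ∅ = F_0 ⊂ F_1 ⊂ ⋯ ⊂ F_k ⊂ F_{k+1} = E and ∅ = F'_0 ⊂ F'_1 ⊂ ⋯ ⊂ F'_m ⊂ F'_{m+1} = E be chains of flats of M with {F_1,…,F_k} ⊆ {F'_1,…,F'_m}. Let X ⊆ E and write X_i := X ∩ (F_{i+1} \ F_i) for i = 0,…,k and X'_j := X ∩ (F'_{j+1} \ F'_j) for j = 0,…,m. Assume ∑_{i=0}^{k} (r(F_i ∪ X_i) − r(F_i)) = ∑_{j=0}^{m} (r(F'_j ∪ X'_j) − r(F'_j)). Then ∑_{i=0}^{k} (r(F_i ∪ X_i)² − r(F_i)²) ≤ ∑_{j=0}^{m} (r(F'_j ∪ X'_j)² − r(F'_j)²), and equality holds if and only if the family of flats {F'_0, F'_1, …, F'_{m+1}} ∪ {cl(F_i ∪ X_i) : i = 0,…,k} is a chain (totally ordered by inclusion). -/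
open Set

variable {α : Type*}

section AuxRank
namespace Matroid
variable {M : Matroid α} [M.RankFinite] {I J X Y S T : Set α}

lemma indep_ncard_le_base (hB : M.IsBase Y) (hI : M.Indep I) : I.ncard ≤ Y.ncard := by
  obtain ⟨B', hB', hIB'⟩ := hI.exists_isBase_superset
  calc I.ncard ≤ B'.ncard := ncard_le_ncard hIB' hB'.finite
    _ = Y.ncard := hB'.ncard_eq_ncard_of_isBase hB

lemma rk'_bddAbove (M : Matroid α) [M.RankFinite] (X : Set α) :
    BddAbove {n : ℕ | ∃ I, M.Indep I ∧ I ⊆ X ∧ I.ncard = n} := by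
  obtain ⟨B, hB⟩ := M.exists_isBase
  exact ⟨B.ncard, fun n ⟨I, hI, _, hn⟩ => hn ▸ indep_ncard_le_base hB hI⟩

lemma rk'_set_nonempty (M : Matroid α) (X : Set α) :
    {n : ℕ | ∃ I, M.Indep I ∧ I ⊆ X ∧ I.ncard = n}.Nonempty :=
  ⟨0, ∅, M.empty_indep, empty_subset _, ncard_empty _⟩

lemma ncard_le_rk' (hI : M.Indep I) (hIX : I ⊆ X) : I.ncard ≤ M.rk' X :=
  le_csSup (M.rk'_bddAbove X) ⟨I, hI, hIX, rfl⟩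

lemma IsBasis'.rk'_eq (hI : M.IsBasis' I X) : M.rk' X = I.ncard := by
  refine le_antisymm (csSup_le (M.rk'_set_nonempty X) ?_) (ncard_le_rk' hI.indep hI.subset)
  rintro n ⟨J, hJ, hJX, rfl⟩
  obtain ⟨J', hJ', hJJ'⟩ := hJ.subset_isBasis'_of_subset hJX
  have hfin : J'.Finite := hJ'.indep.finite
  calc J.ncard ≤ J'.ncard := ncard_le_ncard hJJ' hfin
    _ = I.ncard := by
        have := hJ'.encard_eq_encard hI
        rw [ncard_def, this, ← ncard_def]

lemma IsBasis.rk'_eq (hI : M.IsBasis I X) : M.rk' X = I.ncard := hI.isBasis'.rk'_eq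

lemma rk'_mono (M : Matroid α) [M.RankFinite] (h : X ⊆ Y) : M.rk' X ≤ M.rk' Y :=
  csSup_le_csSup (M.rk'_bddAbove Y) (M.rk'_set_nonempty X)
    (fun n ⟨I, hI, hIX, hn⟩ => ⟨I, hI, hIX.trans h, hn⟩)

lemma rk'_closure_eq (M : Matroid α) [M.RankFinite] (X : Set α) :
    M.rk' (M.closure X) = M.rk' X := by
  obtain ⟨I, hI⟩ := M.exists_isBasis' X
  rw [hI.rk'_eq, hI.isBasis_closure_right.rk'_eq]

lemma rk'_le_of_subset_closure (h : X ⊆ M.closure Y) : M.rk' X ≤ M.rk' Y := by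
  rw [← M.rk'_closure_eq Y]; exact M.rk'_mono h

lemma rk'_submod (M : Matroid α) [M.RankFinite] (X Y : Set α) :
    M.rk' (X ∪ Y) + M.rk' (X ∩ Y) ≤ M.rk' X + M.rk' Y := by
  obtain ⟨I, hI⟩ := M.exists_isBasis' (X ∩ Y)
  obtain ⟨J, hJ, hIJ⟩ := hI.indep.subset_isBasis'_of_subset (hI.subset.trans (inter_subset_left.trans subset_union_left))
  have hJfin : J.Finite := hJ.indep.finite
  rw [hJ.rk'_eq, hI.rk'_eq]
  have h1 : (J ∩ X).ncard ≤ M.rk' X := ncard_le_rk' (hJ.indep.subset inter_subset_left)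
    inter_subset_right
  have h2 : (J ∩ Y).ncard ≤ M.rk' Y := ncard_le_rk' (hJ.indep.subset inter_subset_left)
    inter_subset_right
  have hu : (J ∩ X) ∪ (J ∩ Y) = J := by
    rw [← inter_union_distrib_left, inter_eq_self_of_subset_left hJ.subset]
  have hcard := ncard_union_add_ncard_inter (J ∩ X) (J ∩ Y)
    (hJfin.subset inter_subset_left) (hJfin.subset inter_subset_left)
  rw [hu] at hcard
  have hIsub : I ⊆ (J ∩ X) ∩ (J ∩ Y) := by
    rw [inter_inter_inter_comm, inter_self, ← inter_assoc]
    exact subset_inter (subset_inter hIJ (hI.subset.trans inter_subset_left)) (hI.subset.trans inter_subset_right)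
  have : I.ncard ≤ ((J ∩ X) ∩ (J ∩ Y)).ncard :=
    ncard_le_ncard hIsub (hJfin.subset (inter_subset_left.trans inter_subset_left))
  omega

lemma closure_eq_closure_of_rk'_le (hST : S ⊆ T) (hr : M.rk' T ≤ M.rk' S) :
    M.closure S = M.closure T := by
  obtain ⟨I, hI⟩ := M.exists_isBasis' S
  obtain ⟨J, hJ, hIJ⟩ := hI.indep.subset_isBasis'_of_subset (hI.subset.trans hST)
  have hfin : J.Finite := hJ.indep.finite
  have : J = I := by
    refine (eq_of_subset_of_ncard_le hIJ ?_ hfin).symm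
    rw [← hI.rk'_eq, ← hJ.rk'_eq]; exact hr
  rw [← hI.closure_eq_closure, ← hJ.closure_eq_closure, this]

lemma flat_eq_closure_of_rk'_le (hF : M.IsFlat Y) (hST : S ⊆ Y) (hr : M.rk' Y ≤ M.rk' S) :
    Y = M.closure S := by
  rw [closure_eq_closure_of_rk'_le hST hr, hF.closure]

lemma rk'_insert_of_not_mem_closure (hy : y ∈ M.E) (h : y ∉ M.closure X) :
    M.rk' X + 1 ≤ M.rk' (insert y X) := by
  obtain ⟨I, hI⟩ := M.exists_isBasis' X
  have hyI : y ∉ I := fun hyI => h (hI.closure_eq_closure ▸ (M.subset_closure I hI.indep.subset_ground) hyI)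
  have hind : M.Indep (insert y I) := by
    rw [hI.indep.insert_indep_iff_of_notMem hyI, hI.closure_eq_closure]
    exact ⟨hy, h⟩
  have := ncard_le_rk' hind (insert_subset_insert hI.subset)
  rw [ncard_insert_of_notMem hyI hI.indep.finite, ← hI.rk'_eq] at this
  exact this

lemma rk'_diminishing (hCD : C ⊆ D) (Z : Set α) :
    M.rk' (D ∪ Z) + M.rk' C ≤ M.rk' (C ∪ Z) + M.rk' D := by
  have h := M.rk'_submod D (C ∪ Z)
  have h1 : D ∪ (C ∪ Z) = D ∪ Z := by rw [← union_assoc, union_eq_self_of_subset_right hCD]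
  have h2 : M.rk' C ≤ M.rk' (D ∩ (C ∪ Z)) :=
    M.rk'_mono (subset_inter hCD subset_union_left)
  rw [h1] at h
  omega

end Matroid

open scoped Classical

namespace StmtAux
open Matroid

variable {M : Matroid α} [M.RankFinite]

/-- between two indices where membership in an increasing-ish family flips,
there is a flip step -/
lemma exists_flip (P : ℕ → Prop) (u t : ℕ) (hut : u ≤ t) (hu : ¬ P u) (ht : P t) :
    ∃ s, u ≤ s ∧ s < t ∧ ¬ P s ∧ P (s+1) := by
  obtain ⟨n, rfl⟩ := Nat.exists_eq_add_of_le hut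
  clear hut
  induction n with
  | zero => exact absurd ht hu
  | succ n ih =>
    by_cases h : P (u + n)
    · obtain ⟨s, h1, h2, h3, h4⟩ := ih h
      exact ⟨s, h1, h2.trans_le (by omega), h3, h4⟩
    · exact ⟨u + n, Nat.le_add_right _ _, by omega, h, ht⟩

section Local

/-- prefix set in the local analysis -/
def Yh (G : ℕ → Set α) (X : Set α) (s : ℕ) : Set α := G 0 ∪ X ∩ (G s \ G 0)

variable {t : ℕ} {G : ℕ → Set α} {X : Set α}

lemma hGle (hGmono : ∀ u < t, G u ⊆ G (u+1)) :
    ∀ u v, u ≤ v → v ≤ t → G u ⊆ G v := by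
  intro u v huv hvt
  obtain ⟨n, rfl⟩ := Nat.exists_eq_add_of_le huv
  clear huv
  induction n with
  | zero => rfl
  | succ n ih =>
    exact (ih (by omega)).trans (hGmono (u+n) (by omega))

lemma Yh_zero : Yh G X 0 = G 0 := by simp [Yh]

lemma Yh_subset (hGmono : ∀ u < t, G u ⊆ G (u+1)) {s : ℕ} (hs : s ≤ t) :
    Yh G X s ⊆ G s :=
  union_subset (hGle hGmono 0 s (Nat.zero_le _) hs) ((inter_subset_right).trans diff_subset)

lemma Yh_mono (hGmono : ∀ u < t, G u ⊆ G (u+1)) {s s' : ℕ} (hss' : s ≤ s') (hs' : s' ≤ t) :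
    Yh G X s ⊆ Yh G X s' := by
  apply union_subset_union_right
  apply inter_subset_inter_right
  exact diff_subset_diff_left (hGle hGmono s s' hss' hs')

lemma Yh_step (hGmono : ∀ u < t, G u ⊆ G (u+1)) {u : ℕ} (hu : u < t) :
    Yh G X (u+1) = Yh G X u ∪ X ∩ (G (u+1) \ G u) := by
  have h0 : ∀ x, x ∈ G 0 → x ∈ G u := @(hGle hGmono 0 u (Nat.zero_le _) (le_of_lt hu))
  have h1 : ∀ x, x ∈ G u → x ∈ G (u+1) := @(hGmono u hu)
  ext x
  simp only [Yh, mem_union, mem_inter_iff, mem_diff]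
  have := h0 x; have := h1 x
  tauto

lemma Yh_subset_ground (hGflat : ∀ u ≤ t, M.IsFlat (G u)) (hX : X ⊆ M.E) {s : ℕ} (hs : s ≤ t) :
    Yh G X s ⊆ M.E :=
  union_subset (hGflat 0 (Nat.zero_le _)).subset_ground (inter_subset_left.trans hX)

/-- Step inequality. -/
lemma local_step (hGflat : ∀ u ≤ t, M.IsFlat (G u)) (hGmono : ∀ u < t, G u ⊆ G (u+1))
    (hX : X ⊆ M.E) {u : ℕ} (hu : u < t) :
    M.rk' (G u ∪ X ∩ (G (u+1) \ G u)) + M.rk' (Yh G X u)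
      ≤ M.rk' (Yh G X (u+1)) + M.rk' (G u) := by
  have h := M.rk'_diminishing (C := Yh G X u) (D := G u)
    (Yh_subset hGmono (le_of_lt hu)) (X ∩ (G (u+1) \ G u))
  rwa [← Yh_step hGmono hu] at h

/-- Linear inequality for one interval. -/
theorem local_linear (hGflat : ∀ u ≤ t, M.IsFlat (G u)) (hGmono : ∀ u < t, G u ⊆ G (u+1))
    (hX : X ⊆ M.E) :
    ∑ u ∈ Finset.range t, ((M.rk' (G u ∪ X ∩ (G (u+1) \ G u)) : ℤ) - M.rk' (G u))
      ≤ (M.rk' (G 0 ∪ X ∩ (G t \ G 0)) : ℤ) - M.rk' (G 0) := by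
  have key : ∑ u ∈ Finset.range t,
      (((M.rk' (Yh G X (u+1)) : ℤ)) - M.rk' (Yh G X u))
      = (M.rk' (G 0 ∪ X ∩ (G t \ G 0)) : ℤ) - M.rk' (G 0) := by
    rw [Finset.sum_range_sub (fun s => (M.rk' (Yh G X s) : ℤ))]
    rw [Yh_zero]; rfl
  rw [← key]
  apply Finset.sum_le_sum
  intro u hu
  have := local_step hGflat hGmono hX (Finset.mem_range.mp hu)
  push_cast
  omega


/-- Squared inequality plus equality characterization for one interval,
assuming the linear sums are equal. -/
theorem local_sq (hGflat : ∀ u ≤ t, M.IsFlat (G u)) (hGmono : ∀ u < t, G u ⊆ G (u+1))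
    (hX : X ⊆ M.E)
    (heq : ∑ u ∈ Finset.range t, ((M.rk' (G u ∪ X ∩ (G (u+1) \ G u)) : ℤ) - M.rk' (G u))
      = (M.rk' (G 0 ∪ X ∩ (G t \ G 0)) : ℤ) - M.rk' (G 0)) :
    (M.rk' (G 0 ∪ X ∩ (G t \ G 0)) : ℤ)^2 - (M.rk' (G 0) : ℤ)^2
      ≤ ∑ u ∈ Finset.range t, ((M.rk' (G u ∪ X ∩ (G (u+1) \ G u)) : ℤ)^2 - (M.rk' (G u) : ℤ)^2)
    ∧ (((M.rk' (G 0 ∪ X ∩ (G t \ G 0)) : ℤ)^2 - (M.rk' (G 0) : ℤ)^2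
      = ∑ u ∈ Finset.range t, ((M.rk' (G u ∪ X ∩ (G (u+1) \ G u)) : ℤ)^2 - (M.rk' (G u) : ℤ)^2))
      ↔ ∀ u, 0 < u → u < t →
          G u ⊆ M.closure (G 0 ∪ X ∩ (G t \ G 0))
            ∨ M.closure (G 0 ∪ X ∩ (G t \ G 0)) ⊆ G u) := by
  set a : ℕ → ℕ := fun u => M.rk' (G u ∪ X ∩ (G (u+1) \ G u)) with ha
  set b : ℕ → ℕ := fun u => M.rk' (G u) with hb
  set ρ : ℕ → ℕ := fun s => M.rk' (Yh G X s) with hρ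
  have hρ0 : ρ 0 = b 0 := by simp only [hρ, hb, Yh_zero]
  have hρt : ρ t = M.rk' (G 0 ∪ X ∩ (G t \ G 0)) := rfl
  have hsq0 : ((ρ 0 : ℤ))^2 = ((b 0 : ℤ))^2 := by rw [hρ0]
  have htel : ∀ f : ℕ → ℤ, ∑ u ∈ Finset.range t, (f (u+1) - f u) = f t - f 0 :=
    fun f => Finset.sum_range_sub f t
  have hstep : ∀ u < t, a u + ρ u ≤ ρ (u+1) + b u := fun u hu =>
    local_step hGflat hGmono hX hu
  have hab : ∀ u < t, b u ≤ a u := fun u hu => M.rk'_mono subset_union_left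
  have hρb : ∀ u, u ≤ t → ρ u ≤ b u := fun u hu => M.rk'_mono (Yh_subset hGmono hu)
  have htight : ∀ u < t, (a u : ℤ) - b u = (ρ (u+1) : ℤ) - ρ u := by
    have hsum : ∑ u ∈ Finset.range t,
        (((ρ (u+1) : ℤ) - ρ u) - ((a u : ℤ) - b u)) = 0 := by
      rw [Finset.sum_sub_distrib, htel (fun s => (ρ s : ℤ))]
      have heq' : ∑ u ∈ Finset.range t, ((a u : ℤ) - b u)
          = (ρ t : ℤ) - (ρ 0 : ℤ) := by
        rw [hρ0]; exact heq
      rw [heq']; ring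
    have hnn : ∀ u ∈ Finset.range t,
        (0:ℤ) ≤ ((ρ (u+1) : ℤ) - ρ u) - ((a u : ℤ) - b u) := by
      intro u hu
      have := hstep u (Finset.mem_range.mp hu)
      push_cast
      omega
    intro u hu
    have := (Finset.sum_eq_zero_iff_of_nonneg hnn).mp hsum u (Finset.mem_range.mpr hu)
    omega
  have hkey : ∑ u ∈ Finset.range t, ((a u : ℤ)^2 - (b u : ℤ)^2)
      - ((ρ t : ℤ)^2 - (ρ 0 : ℤ)^2)
      = ∑ u ∈ Finset.range t, 2 * ((a u : ℤ) - b u) * ((b u : ℤ) - ρ u) := by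
    rw [← htel (fun s => (ρ s : ℤ)^2), ← Finset.sum_sub_distrib]
    apply Finset.sum_congr rfl
    intro u hu
    have h := htight u (Finset.mem_range.mp hu)
    linear_combination ((ρ (u+1) : ℤ) + ρ u + (a u : ℤ) - b u) * h
  have hterm_nn : ∀ u ∈ Finset.range t,
      (0:ℤ) ≤ 2 * ((a u : ℤ) - b u) * ((b u : ℤ) - ρ u) := by
    intro u hu
    have h1 := hab u (Finset.mem_range.mp hu)
    have h2 := hρb u (le_of_lt (Finset.mem_range.mp hu))
    have e1 : (0:ℤ) ≤ ((a u : ℤ) - b u) := by push_cast; omega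
    have e2 : (0:ℤ) ≤ ((b u : ℤ) - ρ u) := by push_cast; omega
    positivity
  constructor
  · show ((ρ t : ℤ))^2 - ((b 0 : ℤ))^2
      ≤ ∑ u ∈ Finset.range t, ((a u : ℤ)^2 - (b u : ℤ)^2)
    have := Finset.sum_nonneg hterm_nn
    linarith [hkey, hsq0]
  · show (((ρ t : ℤ))^2 - ((b 0 : ℤ))^2
        = ∑ u ∈ Finset.range t, ((a u : ℤ)^2 - (b u : ℤ)^2))
      ↔ ∀ u, 0 < u → u < t →
          G u ⊆ M.closure (G 0 ∪ X ∩ (G t \ G 0))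
            ∨ M.closure (G 0 ∪ X ∩ (G t \ G 0)) ⊆ G u
    have hiff1 : (((ρ t : ℤ))^2 - ((b 0 : ℤ))^2
        = ∑ u ∈ Finset.range t, ((a u : ℤ)^2 - (b u : ℤ)^2))
        ↔ ∀ u < t, ((a u : ℤ) - b u) * ((b u : ℤ) - ρ u) = 0 := by
      constructor
      · intro h
        have hz : ∑ u ∈ Finset.range t,
            2 * ((a u : ℤ) - b u) * ((b u : ℤ) - ρ u) = 0 := by
          linarith [hkey, hsq0]
        intro u hu
        have := (Finset.sum_eq_zero_iff_of_nonneg hterm_nn).mp hz u (Finset.mem_range.mpr hu)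
        linarith [this]
      · intro h
        have hz : ∑ u ∈ Finset.range t,
            2 * ((a u : ℤ) - b u) * ((b u : ℤ) - ρ u) = 0 :=
          Finset.sum_eq_zero fun u hu =>
            by linear_combination 2 * (h u (Finset.mem_range.mp hu))
        linarith [hkey, hsq0, hz]
    rw [hiff1]
    set Z := M.closure (G 0 ∪ X ∩ (G t \ G 0)) with hZ
    have hZcl : Z = M.closure (Yh G X t) := rfl
    have hGE : ∀ u ≤ t, G u ⊆ M.E := fun u hu => (hGflat u hu).subset_ground
    have hXuempty : ∀ u < t, a u = b u → Yh G X (u+1) = Yh G X u := by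
      intro u hu hab'
      have hsub : G u ⊆ G u ∪ X ∩ (G (u+1) \ G u) := subset_union_left
      have hcl : M.closure (G u) = M.closure (G u ∪ X ∩ (G (u+1) \ G u)) :=
        M.closure_eq_closure_of_rk'_le hsub
          (by simp only [ha, hb] at hab'; exact le_of_eq hab')
      have hXsub : X ∩ (G (u+1) \ G u) ⊆ G u := by
        have h1 : X ∩ (G (u+1) \ G u) ⊆ M.closure (G u ∪ X ∩ (G (u+1) \ G u)) :=
          (subset_union_right).trans
            (M.subset_closure _ (union_subset (hGE u (le_of_lt hu)) (inter_subset_left.trans hX)))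
        rw [← hcl, (hGflat u (le_of_lt hu)).closure] at h1
        exact h1
      have hXe : X ∩ (G (u+1) \ G u) = ∅ := by
        rw [eq_empty_iff_forall_notMem]
        intro x hx
        exact (hx.2.2 : x ∉ G u) (hXsub hx)
      rw [Yh_step hGmono hu, hXe, union_empty]
    constructor
    · intro h u hu0 hut
      by_cases hex : ∃ v, (u ≤ v ∧ v < t) ∧ a v ≠ b v
      · obtain ⟨v₀, ⟨⟨huv₀, hv₀t⟩, hav₀⟩, hmin⟩ :
            ∃ v₀, ((u ≤ v₀ ∧ v₀ < t) ∧ a v₀ ≠ b v₀) ∧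
              ∀ w < v₀, ¬((u ≤ w ∧ w < t) ∧ a w ≠ b w) :=
          ⟨Nat.find hex, Nat.find_spec hex, fun w hw => Nat.find_min hex hw⟩
        have hconst : ∀ n, u + n ≤ v₀ → Yh G X (u+n) = Yh G X u := by
          intro n
          induction n with
          | zero => intro _; rfl
          | succ n ih =>
            intro hn
            have hw : a (u+n) = b (u+n) := by
              by_contra hne
              exact hmin (u+n) (by omega) ⟨⟨by omega, by omega⟩, hne⟩
            rw [show u + (n+1) = (u+n)+1 by ring, hXuempty (u+n) (by omega) hw,
              ih (by omega)]
        have hYv₀ : Yh G X v₀ = Yh G X u := by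
          have := hconst (v₀ - u) (by omega)
          rwa [show u + (v₀ - u) = v₀ by omega] at this
        have hbρ : b v₀ = ρ v₀ := by
          have h0 := h v₀ hv₀t
          have hne : (a v₀ : ℤ) - b v₀ ≠ 0 := by
            intro hcon; apply hav₀; omega
          rcases mul_eq_zero.mp h0 with h1 | h1
          · exact absurd h1 hne
          · omega
        have hGv₀ : G v₀ = M.closure (Yh G X v₀) :=
          M.flat_eq_closure_of_rk'_le (hGflat v₀ (le_of_lt hv₀t))
            (Yh_subset hGmono (le_of_lt hv₀t)) (le_of_eq hbρ)
        left
        calc G u ⊆ G v₀ := hGle hGmono u v₀ huv₀ (le_of_lt hv₀t)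
          _ = M.closure (Yh G X v₀) := hGv₀
          _ ⊆ M.closure (Yh G X t) :=
              M.closure_subset_closure (Yh_mono hGmono (le_of_lt hv₀t) le_rfl)
          _ = Z := rfl
      · push_neg at hex
        have hconst : ∀ n, u + n ≤ t → Yh G X (u+n) = Yh G X u := by
          intro n
          induction n with
          | zero => intro _; rfl
          | succ n ih =>
            intro hn
            have hw : a (u+n) = b (u+n) := hex (u+n) ⟨by omega, by omega⟩
            rw [show u + (n+1) = (u+n)+1 by ring, hXuempty (u+n) (by omega) hw,
              ih (by omega)]
        have hYt : Yh G X t = Yh G X u := by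
          have := hconst (t - u) (by omega)
          rwa [show u + (t - u) = t by omega] at this
        right
        rw [hZcl, hYt]
        calc M.closure (Yh G X u) ⊆ M.closure (G u) :=
              M.closure_subset_closure (Yh_subset hGmono (le_of_lt hut))
          _ = G u := (hGflat u (le_of_lt hut)).closure
    · intro h u hut
      rcases Nat.eq_zero_or_pos u with rfl | hu0
      · have hc : ((ρ 0 : ℤ)) = ((b 0 : ℤ)) := by rw [hρ0]
        rw [hc]; ring
      by_contra hcon
      have hane : a u ≠ b u := by
        intro hcon2; apply hcon; rw [hcon2]; ring
      have hbne : b u ≠ ρ u := by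
        intro hcon2; apply hcon; rw [hcon2]; ring
      clear hcon
      have hXuZ : X ∩ (G (u+1) \ G u) ⊆ Z := by
        refine subset_trans ?_ (M.subset_closure _
          (Yh_subset_ground hGflat hX le_rfl))
        intro x hx
        right
        refine ⟨hx.1, ⟨hGle hGmono (u+1) t hut le_rfl hx.2.1, fun hx0 => hx.2.2 ?_⟩⟩
        exact hGle hGmono 0 u (Nat.zero_le _) (le_of_lt hut) hx0
      have hGuZ : G u ⊆ Z := by
        rcases h u hu0 hut with h' | h'
        · exact h'
        · exfalso
          apply hane
          have hXsub : X ∩ (G (u+1) \ G u) ⊆ G u := hXuZ.trans h'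
          have he : G u ∪ X ∩ (G (u+1) \ G u) = G u := union_eq_self_of_subset_right hXsub
          simp only [ha, hb, he]
      have hnotsub : ¬ G u ⊆ M.closure (Yh G X u) := by
        intro hsub
        apply hbne
        have h1 : b u ≤ ρ u := M.rk'_le_of_subset_closure hsub
        have h2 := hρb u (le_of_lt hut)
        omega
      obtain ⟨y, hyGu, hycl⟩ := not_subset.mp hnotsub
      have hyE : y ∈ M.E := hGE u (le_of_lt hut) hyGu
      have hyZ : y ∈ M.closure (Yh G X t) := hGuZ hyGu
      obtain ⟨s, hus, hst, hs1, hs2⟩ := exists_flip (fun s => y ∈ M.closure (Yh G X s))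
        u t (le_of_lt hut) hycl hyZ
      have hins : ρ s + 1 ≤ M.rk' (insert y (Yh G X s)) :=
        M.rk'_insert_of_not_mem_closure hyE hs1
      have hYsE : Yh G X (s+1) ⊆ M.E := by
        rw [Yh_step hGmono hst]
        rw [← Yh_step hGmono hst]
        exact Yh_subset_ground hGflat hX hst
      have hup : M.rk' (insert y (Yh G X s) ∪ X ∩ (G (s+1) \ G s)) ≤ ρ (s+1) := by
        have hsub : insert y (Yh G X s) ∪ X ∩ (G (s+1) \ G s)
            ⊆ M.closure (Yh G X (s+1)) := by
          apply union_subset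
          · apply insert_subset hs2
            exact subset_trans (Yh_mono hGmono (Nat.le_succ s) hst)
              (M.subset_closure _ hYsE)
          · refine subset_trans ?_ (M.subset_closure _ hYsE)
            rw [Yh_step hGmono hst]
            exact subset_union_right
        calc M.rk' (insert y (Yh G X s) ∪ X ∩ (G (s+1) \ G s))
            ≤ M.rk' (M.closure (Yh G X (s+1))) := M.rk'_mono hsub
          _ = ρ (s+1) := M.rk'_closure_eq _
      have hdim : M.rk' (G s ∪ X ∩ (G (s+1) \ G s)) + M.rk' (insert y (Yh G X s))
          ≤ M.rk' (insert y (Yh G X s) ∪ X ∩ (G (s+1) \ G s)) + M.rk' (G s) :=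
        M.rk'_diminishing (insert_subset (hGle hGmono u s hus (le_of_lt hst) hyGu)
          (Yh_subset hGmono (le_of_lt hst))) _
      have ht' := htight s hst
      exfalso
      have hav : a s = M.rk' (G s ∪ X ∩ (G (s+1) \ G s)) := rfl
      have hbv : b s = M.rk' (G s) := rfl
      rw [hav, hbv] at ht'
      omega


theorem local_linear' (hGflat : ∀ u ≤ t, M.IsFlat (G u)) (hGmono : ∀ u < t, G u ⊆ G (u+1))
    (hX : X ⊆ M.E) {A B : Set α} (hG0 : G 0 = A) (hGt : G t = B) :
    ∑ u ∈ Finset.range t, ((M.rk' (G u ∪ X ∩ (G (u+1) \ G u)) : ℤ) - M.rk' (G u))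
      ≤ (M.rk' (A ∪ X ∩ (B \ A)) : ℤ) - M.rk' A := by
  subst hG0; subst hGt; exact local_linear hGflat hGmono hX

theorem local_sq' (hGflat : ∀ u ≤ t, M.IsFlat (G u)) (hGmono : ∀ u < t, G u ⊆ G (u+1))
    (hX : X ⊆ M.E) {A B : Set α} (hG0 : G 0 = A) (hGt : G t = B)
    (heq : ∑ u ∈ Finset.range t, ((M.rk' (G u ∪ X ∩ (G (u+1) \ G u)) : ℤ) - M.rk' (G u))
      = (M.rk' (A ∪ X ∩ (B \ A)) : ℤ) - M.rk' A) :
    (M.rk' (A ∪ X ∩ (B \ A)) : ℤ)^2 - (M.rk' A : ℤ)^2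
      ≤ ∑ u ∈ Finset.range t, ((M.rk' (G u ∪ X ∩ (G (u+1) \ G u)) : ℤ)^2 - (M.rk' (G u) : ℤ)^2)
    ∧ (((M.rk' (A ∪ X ∩ (B \ A)) : ℤ)^2 - (M.rk' A : ℤ)^2
      = ∑ u ∈ Finset.range t, ((M.rk' (G u ∪ X ∩ (G (u+1) \ G u)) : ℤ)^2 - (M.rk' (G u) : ℤ)^2))
      ↔ ∀ u, 0 < u → u < t →
          G u ⊆ M.closure (A ∪ X ∩ (B \ A)) ∨ M.closure (A ∪ X ∩ (B \ A)) ⊆ G u) := by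
  subst hG0; subst hGt; exact local_sq hGflat hGmono hX heq

end Local

lemma sum_split (σ : ℕ → ℕ) (k : ℕ)
    (hmono : ∀ i i', i ≤ i' → i' ≤ k+1 → σ i ≤ σ i') (f : ℕ → ℤ) :
    ∑ j ∈ Finset.Ico (σ 0) (σ (k+1)), f j
      = ∑ i ∈ Finset.range (k+1), ∑ j ∈ Finset.Ico (σ i) (σ (i+1)), f j := by
  have main : ∀ n, n ≤ k+1 → ∑ j ∈ Finset.Ico (σ 0) (σ n), f j
      = ∑ i ∈ Finset.range n, ∑ j ∈ Finset.Ico (σ i) (σ (i+1)), f j := by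
    intro n
    induction n with
    | zero => intro _; simp
    | succ n ih =>
      intro hn
      rw [Finset.sum_range_succ, ← ih (by omega)]
      exact (Finset.sum_Ico_consecutive f (hmono 0 n (Nat.zero_le _) (by omega))
        (hmono n (n+1) (by omega) hn)).symm
  exact main (k+1) le_rfl

end StmtAux



end AuxRank

/-- refining a chain does not decrease the potential `φ`, provided the
rank in the corresponding matroids `M⋆𝓕` agrees; equality holds iff the refined
chain together with the flats `cl(F_i ∪ X_i)` forms a chain. -/
theorem stmt_14 (M : Matroid α) [M.RankFinite] (hM : M.Loopless')
    (k m : ℕ) (F F' : ℕ → Set α)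
    (hF0 : F 0 = ∅) (hFE : F (k+1) = M.E)
    (hFflat : ∀ i ≤ k+1, M.IsFlat (F i)) (hFmono : ∀ i ≤ k, F i ⊂ F (i+1))
    (hF'0 : F' 0 = ∅) (hF'E : F' (m+1) = M.E)
    (hF'flat : ∀ j ≤ m+1, M.IsFlat (F' j)) (hF'mono : ∀ j ≤ m, F' j ⊂ F' (j+1))
    (hsub : ∀ i, 1 ≤ i → i ≤ k → ∃ j, 1 ≤ j ∧ j ≤ m ∧ F i = F' j)
    (X : Set α) (hX : X ⊆ M.E)
    (hrk : ∑ i ∈ Finset.range (k+1),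
        ((M.rk' (F i ∪ X ∩ (F (i+1) \ F i)) : ℤ) - (M.rk' (F i) : ℤ))
      = ∑ j ∈ Finset.range (m+1),
        ((M.rk' (F' j ∪ X ∩ (F' (j+1) \ F' j)) : ℤ) - (M.rk' (F' j) : ℤ))) :
    (∑ i ∈ Finset.range (k+1),
        ((M.rk' (F i ∪ X ∩ (F (i+1) \ F i)) : ℤ)^2 - (M.rk' (F i) : ℤ)^2)
      ≤ ∑ j ∈ Finset.range (m+1),
        ((M.rk' (F' j ∪ X ∩ (F' (j+1) \ F' j)) : ℤ)^2 - (M.rk' (F' j) : ℤ)^2)) ∧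
    ((∑ i ∈ Finset.range (k+1),
        ((M.rk' (F i ∪ X ∩ (F (i+1) \ F i)) : ℤ)^2 - (M.rk' (F i) : ℤ)^2)
      = ∑ j ∈ Finset.range (m+1),
        ((M.rk' (F' j ∪ X ∩ (F' (j+1) \ F' j)) : ℤ)^2 - (M.rk' (F' j) : ℤ)^2))
      ↔ IsChain (· ⊆ ·)
          ({G : Set α | ∃ j ≤ m+1, G = F' j} ∪
           {G : Set α | ∃ i ≤ k, G = M.closure (F i ∪ X ∩ (F (i+1) \ F i))})) := by
  classical
  have hF'le : ∀ j j', j ≤ j' → j' ≤ m+1 → F' j ⊆ F' j' :=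
    StmtAux.hGle (fun u hu => (hF'mono u (by omega)).subset)
  have hFle : ∀ i i', i ≤ i' → i' ≤ k+1 → F i ⊆ F i' :=
    StmtAux.hGle (fun u hu => (hFmono u (by omega)).subset)
  -- construction of the reindexing map σ
  have hσex : ∀ i, ∃ j, j ≤ m+1 ∧ (i ≤ k+1 → F i = F' j) ∧ (i = 0 → j = 0) ∧
      (i = k+1 → j = m+1) := by
    intro i
    rcases Nat.eq_zero_or_pos i with rfl | h0
    · exact ⟨0, Nat.zero_le _, fun _ => by rw [hF0, hF'0], fun _ => rfl,
        fun h => absurd h.symm (by omega)⟩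
    rcases eq_or_ne i (k+1) with rfl | hik
    · exact ⟨m+1, le_rfl, fun _ => by rw [hFE, hF'E], fun h => absurd h (by omega),
        fun _ => rfl⟩
    by_cases hik' : i ≤ k
    · obtain ⟨j, hj1, hj2, hj3⟩ := hsub i h0 hik'
      exact ⟨j, by omega, fun _ => hj3, fun h => absurd h (by omega), fun h => absurd h hik⟩
    · exact ⟨0, Nat.zero_le _, fun h => absurd h (by omega), fun h => absurd h (by omega),
        fun h => absurd h hik⟩
  choose σ hσub hσF hσz hσt using hσex
  have hσ0' : σ 0 = 0 := hσz 0 rfl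
  have hσtop' : σ (k+1) = m+1 := hσt (k+1) rfl
  have hσmono : ∀ i ≤ k, σ i < σ (i+1) := by
    intro i hi
    by_contra hcon
    push_neg at hcon
    have h1 : F i ⊂ F (i+1) := hFmono i hi
    have h2 : F (i+1) ⊆ F i := by
      rw [hσF i (by omega), hσF (i+1) (by omega)]
      exact hF'le _ _ hcon (hσub i)
    exact h1.not_subset h2
  have hσmono' : ∀ i i', i ≤ i' → i' ≤ k+1 → σ i ≤ σ i' := by
    intro i i' h1 h2
    obtain ⟨n, rfl⟩ := Nat.exists_eq_add_of_le h1
    clear h1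
    induction n with
    | zero => exact le_rfl
    | succ n ih => exact (ih (by omega)).trans (le_of_lt (hσmono (i+n) (by omega)))
  have hticks : ∀ i ≤ k, σ i + (σ (i+1) - σ i) = σ (i+1) := fun i hi =>
    Nat.add_sub_cancel' (le_of_lt (hσmono i hi))
  -- sum splitting
  have hsplit : ∀ f : ℕ → ℤ, ∑ j ∈ Finset.range (m+1), f j
      = ∑ i ∈ Finset.range (k+1), ∑ j ∈ Finset.Ico (σ i) (σ (i+1)), f j := by
    intro f
    have h := StmtAux.sum_split σ k hσmono' f
    rw [hσ0', hσtop', ← Finset.range_eq_Ico] at h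
    exact h
  -- local interval data
  have hGflat' : ∀ i ≤ k, ∀ u ≤ σ (i+1) - σ i, M.IsFlat (F' (σ i + u)) := by
    intro i hi u hu
    have h1 := hticks i hi
    have h2 := hσub (i+1)
    exact hF'flat _ (by omega)
  have hGmono' : ∀ i ≤ k, ∀ u < σ (i+1) - σ i, F' (σ i + u) ⊆ F' (σ i + u + 1) := by
    intro i hi u hu
    have h1 := hticks i hi
    have h2 := hσub (i+1)
    exact (hF'mono _ (by omega)).subset
  have hG0 : ∀ i ≤ k, F' (σ i + 0) = F i := by
    intro i hi
    rw [Nat.add_zero]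
    exact (hσF i (by omega)).symm
  have hGt : ∀ i ≤ k, F' (σ i + (σ (i+1) - σ i)) = F (i+1) := by
    intro i hi
    rw [hticks i hi]
    exact (hσF (i+1) (by omega)).symm
  -- the per-interval linear inequality
  have hlin : ∀ i ∈ Finset.range (k+1),
      ∑ j ∈ Finset.Ico (σ i) (σ (i+1)),
          ((M.rk' (F' j ∪ X ∩ (F' (j+1) \ F' j)) : ℤ) - (M.rk' (F' j) : ℤ))
        ≤ (M.rk' (F i ∪ X ∩ (F (i+1) \ F i)) : ℤ) - (M.rk' (F i) : ℤ) := by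
    intro i hi
    have hi' : i ≤ k := by have := Finset.mem_range.mp hi; omega
    rw [Finset.sum_Ico_eq_sum_range]
    exact StmtAux.local_linear' (hGflat' i hi') (hGmono' i hi') hX (hG0 i hi') (hGt i hi')
  -- linear equality per interval
  have heqi : ∀ i ∈ Finset.range (k+1),
      ∑ j ∈ Finset.Ico (σ i) (σ (i+1)),
          ((M.rk' (F' j ∪ X ∩ (F' (j+1) \ F' j)) : ℤ) - (M.rk' (F' j) : ℤ))
        = (M.rk' (F i ∪ X ∩ (F (i+1) \ F i)) : ℤ) - (M.rk' (F i) : ℤ) := by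
    have hnn : ∀ i ∈ Finset.range (k+1), (0:ℤ) ≤
        ((M.rk' (F i ∪ X ∩ (F (i+1) \ F i)) : ℤ) - (M.rk' (F i) : ℤ))
        - ∑ j ∈ Finset.Ico (σ i) (σ (i+1)),
            ((M.rk' (F' j ∪ X ∩ (F' (j+1) \ F' j)) : ℤ) - (M.rk' (F' j) : ℤ)) := by
      intro i hi
      have := hlin i hi
      omega
    have hz : ∑ i ∈ Finset.range (k+1),
        (((M.rk' (F i ∪ X ∩ (F (i+1) \ F i)) : ℤ) - (M.rk' (F i) : ℤ))
        - ∑ j ∈ Finset.Ico (σ i) (σ (i+1)),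
            ((M.rk' (F' j ∪ X ∩ (F' (j+1) \ F' j)) : ℤ) - (M.rk' (F' j) : ℤ))) = 0 := by
      rw [Finset.sum_sub_distrib, sub_eq_zero]
      exact hrk.trans (hsplit _)
    intro i hi
    have := (Finset.sum_eq_zero_iff_of_nonneg hnn).mp hz i hi
    omega
  -- per-interval squared statement
  have hloc : ∀ i ∈ Finset.range (k+1),
      ((M.rk' (F i ∪ X ∩ (F (i+1) \ F i)) : ℤ)^2 - (M.rk' (F i) : ℤ)^2
        ≤ ∑ j ∈ Finset.Ico (σ i) (σ (i+1)),
            ((M.rk' (F' j ∪ X ∩ (F' (j+1) \ F' j)) : ℤ)^2 - (M.rk' (F' j) : ℤ)^2))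
      ∧ (((M.rk' (F i ∪ X ∩ (F (i+1) \ F i)) : ℤ)^2 - (M.rk' (F i) : ℤ)^2
        = ∑ j ∈ Finset.Ico (σ i) (σ (i+1)),
            ((M.rk' (F' j ∪ X ∩ (F' (j+1) \ F' j)) : ℤ)^2 - (M.rk' (F' j) : ℤ)^2))
        ↔ ∀ u, 0 < u → u < σ (i+1) - σ i →
            (F' (σ i + u) ⊆ M.closure (F i ∪ X ∩ (F (i+1) \ F i))
              ∨ M.closure (F i ∪ X ∩ (F (i+1) \ F i)) ⊆ F' (σ i + u))) := by
    intro i hi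
    have hi' : i ≤ k := by have := Finset.mem_range.mp hi; omega
    have h1 := heqi i hi
    rw [Finset.sum_Ico_eq_sum_range] at h1
    have h := StmtAux.local_sq' (hGflat' i hi') (hGmono' i hi') hX (hG0 i hi') (hGt i hi') h1
    rw [Finset.sum_Ico_eq_sum_range]
    exact h
  -- chain glue
  have hZlow : ∀ i ≤ k, F i ⊆ M.closure (F i ∪ X ∩ (F (i+1) \ F i)) := by
    intro i hi
    refine subset_trans subset_union_left (M.subset_closure _ ?_)
    exact union_subset (hFflat i (by omega)).subset_ground (inter_subset_left.trans hX)
  have hZhigh : ∀ i ≤ k, M.closure (F i ∪ X ∩ (F (i+1) \ F i)) ⊆ F (i+1) := by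
    intro i hi
    have hsubF : F i ∪ X ∩ (F (i+1) \ F i) ⊆ F (i+1) :=
      union_subset (hFle i (i+1) (by omega) (by omega))
        (inter_subset_right.trans diff_subset)
    calc M.closure (F i ∪ X ∩ (F (i+1) \ F i)) ⊆ M.closure (F (i+1)) :=
          M.closure_subset_closure hsubF
      _ = F (i+1) := (hFflat (i+1) (by omega)).closure
  have hglue : (∀ i ∈ Finset.range (k+1), ∀ u, 0 < u → u < σ (i+1) - σ i →
        (F' (σ i + u) ⊆ M.closure (F i ∪ X ∩ (F (i+1) \ F i))
          ∨ M.closure (F i ∪ X ∩ (F (i+1) \ F i)) ⊆ F' (σ i + u)))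
      ↔ IsChain (· ⊆ ·)
          ({G : Set α | ∃ j ≤ m+1, G = F' j} ∪
           {G : Set α | ∃ i ≤ k, G = M.closure (F i ∪ X ∩ (F (i+1) \ F i))}) := by
    constructor
    · intro h
      rintro A (⟨j, hj, rfl⟩ | ⟨i, hi, rfl⟩) B (⟨j', hj', rfl⟩ | ⟨i', hi', rfl⟩) hAB
      · rcases le_total j j' with h' | h'
        · exact Or.inl (hF'le _ _ h' hj')
        · exact Or.inr (hF'le _ _ h' hj)
      · -- F' j vs closure region i'
        by_cases h1 : j ≤ σ i'
        · refine Or.inl (subset_trans ?_ (hZlow i' hi'))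
          rw [hσF i' (by omega)]
          exact hF'le _ _ h1 (hσub i')
        · by_cases h2 : σ (i'+1) ≤ j
          · refine Or.inr (subset_trans (hZhigh i' hi') ?_)
            rw [hσF (i'+1) (by omega)]
            exact hF'le _ _ h2 hj
          · push_neg at h1
            have hcond := h i' (Finset.mem_range.mpr (by omega)) (j - σ i')
              (by omega) (by omega)
            rw [show σ i' + (j - σ i') = j by omega] at hcond
            exact hcond
      · -- closure region i vs F' j'
        by_cases h1 : j' ≤ σ i
        · refine Or.inr (subset_trans ?_ (hZlow i hi))
          rw [hσF i (by omega)]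
          exact hF'le _ _ h1 (hσub i)
        · by_cases h2 : σ (i+1) ≤ j'
          · refine Or.inl (subset_trans (hZhigh i hi) ?_)
            rw [hσF (i+1) (by omega)]
            exact hF'le _ _ h2 hj'
          · push_neg at h1
            have hcond := h i (Finset.mem_range.mpr (by omega)) (j' - σ i)
              (by omega) (by omega)
            rw [show σ i + (j' - σ i) = j' by omega] at hcond
            exact hcond.symm
      · -- two closure regions
        rcases lt_trichotomy i i' with h' | rfl | h'
        · exact Or.inl ((hZhigh i hi).trans ((hFle (i+1) i' (by omega) (by omega)).trans
            (hZlow i' hi')))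
        · exact absurd rfl hAB
        · exact Or.inr ((hZhigh i' hi').trans ((hFle (i'+1) i (by omega) (by omega)).trans
            (hZlow i hi)))
    · intro hch i hi u hu1 hu2
      have hi' : i ≤ k := by have := Finset.mem_range.mp hi; omega
      have hjub : σ i + u ≤ m+1 := by
        have := hticks i hi'
        have := hσub (i+1)
        omega
      have e1 : F' (σ i + u) ∈
          ({G : Set α | ∃ j ≤ m+1, G = F' j} ∪
           {G : Set α | ∃ i ≤ k, G = M.closure (F i ∪ X ∩ (F (i+1) \ F i))}) :=
        Or.inl ⟨σ i + u, hjub, rfl⟩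
      have e2 : M.closure (F i ∪ X ∩ (F (i+1) \ F i)) ∈
          ({G : Set α | ∃ j ≤ m+1, G = F' j} ∪
           {G : Set α | ∃ i ≤ k, G = M.closure (F i ∪ X ∩ (F (i+1) \ F i))}) :=
        Or.inr ⟨i, hi', rfl⟩
      by_cases heq2 : F' (σ i + u) = M.closure (F i ∪ X ∩ (F (i+1) \ F i))
      · exact Or.inl (heq2 ▸ subset_rfl)
      · exact hch e1 e2 heq2
  -- conclusion
  constructor
  · rw [hsplit]
    exact Finset.sum_le_sum (fun i hi => (hloc i hi).1)
  · rw [hsplit, Finset.sum_eq_sum_iff_of_le (fun i hi => (hloc i hi).1), ← hglue]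
    constructor
    · intro h i hi
      exact ((hloc i hi).2).mp (h i hi)
    · intro h i hi
      exact ((hloc i hi).2).mpr (h i hi)
end
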